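/- arXiv:math/0702807 — 3 statements merged into one kernel-verified Lean document; each statement's English description precedes it below -/
import Mathlib

section
/- Let c be a smooth cost function satisfying (A1) and (A2), and let y(x,z) denote the unique point with D_x c(x, y(x,z)) = z, which is a smooth function of (x,z). Fix x, y ∈ ℝⁿ and a constant c₀ ≥ 0. Then the inequality Σ_{i,j,k,l,p,q,r,s} (c^{p,q}c_{ij,p}c_{q,rs} − c_{ij,rs}) c^{r,k}c^{s,l} ξ_iξ_jη_kη_l ≥ c₀|ξ|²|η|² holds for all ξ, η ∈ ℝⁿ with ξ ⊥ η, evaluated at (x,y), if and only if the inequality Σ_{i,j,k,l} ∂²/∂z_k∂z_l [c_{ij}(x, y(x,z))] |_{z = D_x c(x,y)} ξ_iξ_jη_kη_l ≤ −c₀|ξ|²|η|² holds for all ξ, η ∈ ℝⁿ with ξ ⊥ η, where c_{ij} = ∂²c/∂x_i∂x_j. -/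
open Set Filter Topology MeasureTheory
open scoped BigOperators

noncomputable section

/-- The partial derivative `∂f/∂x_i` of a function on `ℝⁿ`. -/
def pd {n : ℕ} (i : Fin n) (f : (Fin n → ℝ) → ℝ) (x : Fin n → ℝ) : ℝ :=
  fderiv ℝ f x (Pi.single i 1)

/-- `D_x c (x, y)`, the gradient of the cost function in the `x`-variable. -/
def Dx {n : ℕ} (c : (Fin n → ℝ) → (Fin n → ℝ) → ℝ) (x y : Fin n → ℝ) :
    Fin n → ℝ :=
  fun i => pd i (fun x' => c x' y) x

/-- `D_y c (x, y)`, the gradient of the cost function in the `y`-variable. -/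
def Dy {n : ℕ} (c : (Fin n → ℝ) → (Fin n → ℝ) → ℝ) (x y : Fin n → ℝ) :
    Fin n → ℝ :=
  fun j => pd j (fun y' => c x y') y

/-- The mixed Hessian matrix `c_{i,j} = ∂²c/∂x_i∂y_j`. -/
def mixHess {n : ℕ} (c : (Fin n → ℝ) → (Fin n → ℝ) → ℝ) (x y : Fin n → ℝ) :
    Matrix (Fin n) (Fin n) ℝ :=
  Matrix.of fun i j => pd j (fun y' => Dx c x y' i) y

/-- The inverse mixed Hessian `(c^{i,j})`. -/
def mixInv {n : ℕ} (c : (Fin n → ℝ) → (Fin n → ℝ) → ℝ) (x y : Fin n → ℝ) :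
    Matrix (Fin n) (Fin n) ℝ :=
  (mixHess c x y)⁻¹

/-- `c_{ij} = ∂²c/∂x_i∂x_j`. -/
def cxx {n : ℕ} (c : (Fin n → ℝ) → (Fin n → ℝ) → ℝ) (x y : Fin n → ℝ)
    (i j : Fin n) : ℝ :=
  pd i (fun x' => Dx c x' y j) x

/-- `c_{ij,k} = ∂³c/∂x_i∂x_j∂y_k`. -/
def cxxy {n : ℕ} (c : (Fin n → ℝ) → (Fin n → ℝ) → ℝ) (x y : Fin n → ℝ)
    (i j k : Fin n) : ℝ :=
  pd k (fun y' => cxx c x y' i j) y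

/-- `c_{q,rs} = ∂³c/∂x_q∂y_r∂y_s`. -/
def cxyy {n : ℕ} (c : (Fin n → ℝ) → (Fin n → ℝ) → ℝ) (x y : Fin n → ℝ)
    (q r s : Fin n) : ℝ :=
  pd s (fun y' => pd r (fun y'' => Dx c x y'' q) y') y

/-- `c_{ij,rs} = ∂⁴c/∂x_i∂x_j∂y_r∂y_s`. -/
def cxxyy {n : ℕ} (c : (Fin n → ℝ) → (Fin n → ℝ) → ℝ) (x y : Fin n → ℝ)
    (i j r s : Fin n) : ℝ :=
  pd s (fun y' => cxxy c x y' i j r) y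

/-- The cost function is `C^∞`-smooth (jointly in both variables). -/
def SmoothCost {n : ℕ} (c : (Fin n → ℝ) → (Fin n → ℝ) → ℝ) : Prop :=
  ContDiff ℝ (⊤ : ℕ∞) fun p : (Fin n → ℝ) × (Fin n → ℝ) => c p.1 p.2

/-- Condition (A1): for all `x, z` there is a unique `y` with `D_x c (x,y) = z`,
and for all `y, z` there is a unique `x` with `D_y c (x,y) = z`. -/
def A1 {n : ℕ} (c : (Fin n → ℝ) → (Fin n → ℝ) → ℝ) : Prop :=
  (∀ x z : Fin n → ℝ, ∃! y : Fin n → ℝ, Dx c x y = z) ∧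
  (∀ y z : Fin n → ℝ, ∃! x : Fin n → ℝ, Dy c x y = z)

/-- Condition (A2): the mixed Hessian is nonsingular everywhere. -/
def A2 {n : ℕ} (c : (Fin n → ℝ) → (Fin n → ℝ) → ℝ) : Prop :=
  ∀ x y : Fin n → ℝ, (mixHess c x y).det ≠ 0

/-- Condition (A3) with constant `c₀` at the pair `(x, y)`: for all orthogonal
`ξ, η`, `∑ (c^{p,q} c_{ij,p} c_{q,rs} - c_{ij,rs}) c^{r,k} c^{s,l} ξ_i ξ_j η_k η_l
≥ c₀ |ξ|² |η|²`. -/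
def A3at {n : ℕ} (c : (Fin n → ℝ) → (Fin n → ℝ) → ℝ) (c₀ : ℝ)
    (x y : Fin n → ℝ) : Prop :=
  ∀ ξ η : Fin n → ℝ, (∑ i : Fin n, ξ i * η i) = 0 →
    c₀ * (∑ i : Fin n, ξ i ^ 2) * (∑ i : Fin n, η i ^ 2) ≤
      ∑ i : Fin n, ∑ j : Fin n, ∑ k : Fin n, ∑ l : Fin n, ∑ r : Fin n, ∑ s : Fin n,
        ((∑ p : Fin n, ∑ q : Fin n,
            mixInv c x y p q * cxxy c x y i j p * cxyy c x y q r s)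
          - cxxyy c x y i j r s)
        * mixInv c x y r k * mixInv c x y s l * ξ i * ξ j * η k * η l

/-- `u` is semi-concave on `Ω`: for some `C > 0`, `u - C|x|²` is concave
(along all segments contained in `Ω`). -/
def SemiConcaveOn {n : ℕ} (Ω : Set (Fin n → ℝ)) (u : (Fin n → ℝ) → ℝ) : Prop :=
  ∃ C : ℝ, 0 < C ∧ ∀ x₀ ∈ Ω, ∀ x₁ ∈ Ω,
    (∀ s : ℝ, s ∈ Icc (0 : ℝ) 1 → (1 - s) • x₀ + s • x₁ ∈ Ω) →
    ∀ t ∈ Icc (0 : ℝ) 1,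
      (1 - t) * (u x₀ - C * ∑ i : Fin n, x₀ i ^ 2)
          + t * (u x₁ - C * ∑ i : Fin n, x₁ i ^ 2)
        ≤ u ((1 - t) • x₀ + t • x₁)
            - C * ∑ i : Fin n, ((1 - t) • x₀ + t • x₁) i ^ 2

/-- The supergradient `∂⁺u(x₀)` of `u` (defined on `Ω`) at `x₀`:
`u(x) ≤ u(x₀) + p·(x - x₀) + o(|x - x₀|)`. -/
def superGrad {n : ℕ} (Ω : Set (Fin n → ℝ)) (u : (Fin n → ℝ) → ℝ)
    (x₀ : Fin n → ℝ) : Set (Fin n → ℝ) :=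
  {p | ∀ ε > (0 : ℝ), ∃ δ > (0 : ℝ), ∀ x ∈ Ω, ‖x - x₀‖ < δ →
        u x ≤ u x₀ + (∑ i : Fin n, p i * (x i - x₀ i)) + ε * ‖x - x₀‖}

/-- The `c`-supergradient `∂⁺_c u(x₀)`:
`u(x) ≤ c(x,y) - c(x₀,y) + u(x₀) + o(|x - x₀|)`. -/
def cSuperGrad {n : ℕ} (c : (Fin n → ℝ) → (Fin n → ℝ) → ℝ)
    (Ω : Set (Fin n → ℝ)) (u : (Fin n → ℝ) → ℝ) (x₀ : Fin n → ℝ) :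
    Set (Fin n → ℝ) :=
  {y | ∀ ε > (0 : ℝ), ∃ δ > (0 : ℝ), ∀ x ∈ Ω, ‖x - x₀‖ < δ →
        u x ≤ c x y - c x₀ y + u x₀ + ε * ‖x - x₀‖}

/-- `h = c(·, y₀) + a₀` is a local `c`-support of `u` at `x₀`:
`h(x₀) = u(x₀)` and `u ≤ h` on a neighbourhood of `x₀` in `Ω`. -/
def IsLocalCSupport {n : ℕ} (c : (Fin n → ℝ) → (Fin n → ℝ) → ℝ)
    (Ω : Set (Fin n → ℝ)) (u : (Fin n → ℝ) → ℝ) (x₀ y₀ : Fin n → ℝ)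
    (a₀ : ℝ) : Prop :=
  u x₀ = c x₀ y₀ + a₀ ∧
  ∃ δ > (0 : ℝ), ∀ x ∈ Ω, ‖x - x₀‖ < δ → u x ≤ c x y₀ + a₀

/-- `h = c(·, y₀) + a₀` is a global `c`-support of `u` at `x₀`:
`h(x₀) = u(x₀)` and `u ≤ h` on all of `Ω`. -/
def IsGlobalCSupport {n : ℕ} (c : (Fin n → ℝ) → (Fin n → ℝ) → ℝ)
    (Ω : Set (Fin n → ℝ)) (u : (Fin n → ℝ) → ℝ) (x₀ y₀ : Fin n → ℝ)
    (a₀ : ℝ) : Prop :=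
  u x₀ = c x₀ y₀ + a₀ ∧ ∀ x ∈ Ω, u x ≤ c x y₀ + a₀

/-- `u` is locally `c`-concave on `Ω`: for every `x₀` in the closure of `Ω` and
every `y ∈ ∂⁺_c u(x₀)`, the function `c(·,y) - c(x₀,y) + u(x₀)` is a local
`c`-support of `u` at `x₀`. -/
def LocallyCConcave {n : ℕ} (c : (Fin n → ℝ) → (Fin n → ℝ) → ℝ)
    (Ω : Set (Fin n → ℝ)) (u : (Fin n → ℝ) → ℝ) : Prop :=
  ∀ x₀ ∈ closure Ω, ∀ y ∈ cSuperGrad c Ω u x₀,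
    IsLocalCSupport c Ω u x₀ y (u x₀ - c x₀ y)

/-- `u` is fully `c`-concave on `Ω`: it is locally `c`-concave and every local
`c`-support is a global `c`-support. -/
def FullyCConcave {n : ℕ} (c : (Fin n → ℝ) → (Fin n → ℝ) → ℝ)
    (Ω : Set (Fin n → ℝ)) (u : (Fin n → ℝ) → ℝ) : Prop :=
  LocallyCConcave c Ω u ∧
  ∀ x₀ ∈ closure Ω, ∀ y₀ : Fin n → ℝ, ∀ a₀ : ℝ,
    IsLocalCSupport c Ω u x₀ y₀ a₀ → ∀ x ∈ Ω, u x ≤ c x y₀ + a₀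

/-- `u` is strictly `c`-concave on `Ω`: it is fully `c`-concave and every global
`c`-support touches the graph of `u` at exactly one point. -/
def StrictlyCConcave {n : ℕ} (c : (Fin n → ℝ) → (Fin n → ℝ) → ℝ)
    (Ω : Set (Fin n → ℝ)) (u : (Fin n → ℝ) → ℝ) : Prop :=
  FullyCConcave c Ω u ∧
  ∀ x₀ ∈ closure Ω, ∀ y₀ : Fin n → ℝ, ∀ a₀ : ℝ,
    IsGlobalCSupport c Ω u x₀ y₀ a₀ →
      {x ∈ closure Ω | u x = c x y₀ + a₀}.Subsingleton


section Statement4Helpers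

variable {n : ℕ}

abbrev EE (n : ℕ) := Fin n → ℝ

def Dd (w : EE n × EE n) (f : EE n × EE n → ℝ) : EE n × EE n → ℝ :=
  fun p => fderiv ℝ f p w

def uu (i : Fin n) : EE n × EE n := (Pi.single i 1, 0)
def vv (j : Fin n) : EE n × EE n := (0, Pi.single j 1)

lemma Dd_contDiff {f : EE n × EE n → ℝ} (hf : ContDiff ℝ (⊤ : ℕ∞) f) (w : EE n × EE n) :
    ContDiff ℝ (⊤ : ℕ∞) (Dd w f) := by
  exact (hf.fderiv_right (by exact_mod_cast le_rfl)).clm_apply contDiff_const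

lemma pi_expand (w : EE n) : w = ∑ s, w s • (Pi.single s (1:ℝ) : EE n) := by
  funext t
  simp [Finset.sum_apply, Pi.single_apply, mul_comm]

lemma clm_expand (L : (EE n) →L[ℝ] ℝ) (w : EE n) :
    L w = ∑ s, w s * L (Pi.single s 1) := by
  conv_lhs => rw [pi_expand w]
  rw [map_sum]
  simp only [_root_.map_smul, smul_eq_mul]

lemma clm_expand_pair (L : (EE n × EE n) →L[ℝ] ℝ) (w : EE n) :
    L ((0 : EE n), w) = ∑ s, w s * L ((0 : EE n), Pi.single s 1) := by
  have hw : ((0 : EE n), w) = ∑ s, w s • (((0 : EE n), (Pi.single s (1:ℝ) : EE n)) : EE n × EE n) := by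
    apply Prod.ext
    · simp [Prod.fst_sum]
    · rw [Prod.snd_sum]
      simpa using pi_expand w
  conv_lhs => rw [hw]
  rw [map_sum]
  simp only [_root_.map_smul, smul_eq_mul]

def CC (c : (Fin n → ℝ) → (Fin n → ℝ) → ℝ) : EE n × EE n → ℝ := fun p => c p.1 p.2

variable {c : (Fin n → ℝ) → (Fin n → ℝ) → ℝ}

lemma pd_eval {f : EE n → ℝ} {L : EE n →L[ℝ] ℝ} {x : EE n} (h : HasFDerivAt f L x) (i : Fin n) :
    pd i f x = L (Pi.single i 1) := by rw [pd, h.fderiv]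

lemma pd_left {F : EE n × EE n → ℝ} {x y : EE n} (hF : DifferentiableAt ℝ F (x, y)) (i : Fin n) :
    pd i (fun x' => F (x', y)) x = Dd (uu i) F (x, y) := by
  have h1 : HasFDerivAt (fun x' : EE n => F (x', y))
      ((fderiv ℝ F (x, y)).comp (ContinuousLinearMap.inl ℝ (EE n) (EE n))) x :=
    hF.hasFDerivAt.comp x (hasFDerivAt_prodMk_left x y)
  rw [pd_eval h1]; rfl

lemma pd_right {F : EE n × EE n → ℝ} {x y : EE n} (hF : DifferentiableAt ℝ F (x, y)) (j : Fin n) :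
    pd j (fun y' => F (x, y')) y = Dd (vv j) F (x, y) := by
  have h1 : HasFDerivAt (fun y' : EE n => F (x, y'))
      ((fderiv ℝ F (x, y)).comp (ContinuousLinearMap.inr ℝ (EE n) (EE n))) y :=
    hF.hasFDerivAt.comp y (hasFDerivAt_prodMk_right x y)
  rw [pd_eval h1]; rfl

section rewr
variable (hc : ContDiff ℝ (⊤ : ℕ∞) (CC c))
include hc

lemma Dx_eq (x y : EE n) (i : Fin n) : Dx c x y i = Dd (uu i) (CC c) (x, y) :=
  pd_left (hc.differentiable (by simp)).differentiableAt i

lemma cxx_eq (x y : EE n) (i j : Fin n) :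
    cxx c x y i j = Dd (uu i) (Dd (uu j) (CC c)) (x, y) := by
  unfold cxx
  have : (fun x' => Dx c x' y j) = fun x' => Dd (uu j) (CC c) (x', y) := by
    funext x'; exact Dx_eq hc x' y j
  rw [this]
  exact pd_left (((Dd_contDiff hc (uu j)).differentiable (by simp)).differentiableAt) i

lemma mixHess_eq (x y : EE n) (i j : Fin n) :
    mixHess c x y i j = Dd (vv j) (Dd (uu i) (CC c)) (x, y) := by
  show pd j (fun y' => Dx c x y' i) y = _
  have : (fun y' => Dx c x y' i) = fun y' => Dd (uu i) (CC c) (x, y') := by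
    funext y'; exact Dx_eq hc x y' i
  rw [this]
  exact pd_right (((Dd_contDiff hc (uu i)).differentiable (by simp)).differentiableAt) j

lemma cxxy_eq (x y : EE n) (i j k : Fin n) :
    cxxy c x y i j k = Dd (vv k) (Dd (uu i) (Dd (uu j) (CC c))) (x, y) := by
  unfold cxxy
  have : (fun y' => cxx c x y' i j) = fun y' => Dd (uu i) (Dd (uu j) (CC c)) (x, y') := by
    funext y'; exact cxx_eq hc x y' i j
  rw [this]
  exact pd_right (((Dd_contDiff (Dd_contDiff hc (uu j)) (uu i)).differentiable (by simp)).differentiableAt) k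

lemma cxyy_eq (x y : EE n) (q r s : Fin n) :
    cxyy c x y q r s = Dd (vv s) (Dd (vv r) (Dd (uu q) (CC c))) (x, y) := by
  unfold cxyy
  have h1 : ∀ y' : EE n, (fun y'' => Dx c x y'' q) = fun y'' => Dd (uu q) (CC c) (x, y'') := by
    intro _; funext y''; exact Dx_eq hc x y'' q
  have : (fun y' => pd r (fun y'' => Dx c x y'' q) y') = fun y' => Dd (vv r) (Dd (uu q) (CC c)) (x, y') := by
    funext y'
    rw [h1 y']
    exact pd_right (((Dd_contDiff hc (uu q)).differentiable (by simp)).differentiableAt) r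
  rw [this]
  exact pd_right (((Dd_contDiff (Dd_contDiff hc (uu q)) (vv r)).differentiable (by simp)).differentiableAt) s

lemma cxxyy_eq (x y : EE n) (i j r s : Fin n) :
    cxxyy c x y i j r s = Dd (vv s) (Dd (vv r) (Dd (uu i) (Dd (uu j) (CC c)))) (x, y) := by
  unfold cxxyy
  have : (fun y' => cxxy c x y' i j r) = fun y' => Dd (vv r) (Dd (uu i) (Dd (uu j) (CC c))) (x, y') := by
    funext y'; exact cxxy_eq hc x y' i j r
  rw [this]
  exact pd_right (((Dd_contDiff (Dd_contDiff (Dd_contDiff hc (uu j)) (uu i)) (vv r)).differentiable (by simp)).differentiableAt) s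

end rewr

lemma Dd_comm {f : EE n × EE n → ℝ} (hf : ContDiff ℝ (⊤ : ℕ∞) f) (w w' p₀ : EE n × EE n) :
    Dd w (Dd w' f) p₀ = Dd w' (Dd w f) p₀ := by
  have hdf : Differentiable ℝ f := hf.differentiable (by simp)
  set G := fderiv ℝ f with hG
  have hGc : ContDiff ℝ (⊤ : ℕ∞) G := hf.fderiv_right (by exact_mod_cast le_rfl)
  have hG1 : DifferentiableAt ℝ G p₀ :=
    (hGc.differentiable (by simp)).differentiableAt
  have key : ∀ v v' : EE n × EE n, Dd v (Dd v' f) p₀ = (fderiv ℝ G p₀ v) v' := by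
    intro v v'
    have h2 : HasFDerivAt (fun q => G q v')
        (((ContinuousLinearMap.apply ℝ ℝ v').comp (fderiv ℝ G p₀))) p₀ :=
      (ContinuousLinearMap.apply ℝ ℝ v').hasFDerivAt.comp p₀ hG1.hasFDerivAt
    calc Dd v (Dd v' f) p₀ = fderiv ℝ (fun q => G q v') p₀ v := rfl
    _ = (fderiv ℝ G p₀ v) v' := by rw [h2.fderiv]; rfl
  rw [key w w', key w' w]
  exact second_derivative_symmetric (fun y => (hdf y).hasFDerivAt) hG1.hasFDerivAt w w'

def Jm (Φ : EE n → EE n) (z : EE n) : Matrix (Fin n) (Fin n) ℝ :=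
  Matrix.of fun s l => fderiv ℝ Φ z (Pi.single l 1) s

lemma hasFDerivAt_comp_Phi {Φ : EE n → EE n} {F : EE n × EE n → ℝ} {x z : EE n}
    (hΦ : DifferentiableAt ℝ Φ z) (hF : DifferentiableAt ℝ F (x, Φ z)) :
    HasFDerivAt (fun z' => F (x, Φ z'))
      ((fderiv ℝ F (x, Φ z)).comp
        ((ContinuousLinearMap.inr ℝ (EE n) (EE n)).comp (fderiv ℝ Φ z))) z := by
  have h1 : HasFDerivAt (fun z' => ((x : EE n), Φ z'))
      ((ContinuousLinearMap.inr ℝ (EE n) (EE n)).comp (fderiv ℝ Φ z)) z :=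
    (hasFDerivAt_prodMk_right x (Φ z)).comp z hΦ.hasFDerivAt
  exact hF.hasFDerivAt.comp z h1

lemma pd_comp_Phi {Φ : EE n → EE n} {F : EE n × EE n → ℝ} {x z : EE n}
    (hΦ : DifferentiableAt ℝ Φ z) (hF : DifferentiableAt ℝ F (x, Φ z)) (l : Fin n) :
    pd l (fun z' => F (x, Φ z')) z = ∑ s, Jm Φ z s l * Dd (vv s) F (x, Φ z) := by
  rw [pd_eval (hasFDerivAt_comp_Phi hΦ hF) l]
  have : (fderiv ℝ F (x, Φ z)).comp
        ((ContinuousLinearMap.inr ℝ (EE n) (EE n)).comp (fderiv ℝ Φ z)) (Pi.single l 1)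
      = fderiv ℝ F (x, Φ z) ((0 : EE n), fderiv ℝ Φ z (Pi.single l 1)) := rfl
  rw [this, clm_expand_pair]
  rfl

lemma pd_sum_mul {A B : Fin n → EE n → ℝ} {z : EE n}
    (hA : ∀ s, DifferentiableAt ℝ (A s) z) (hB : ∀ s, DifferentiableAt ℝ (B s) z) (k : Fin n) :
    pd k (fun z' => ∑ s, A s z' * B s z') z
      = ∑ s, (A s z * pd k (B s) z + B s z * pd k (A s) z) := by
  have h : HasFDerivAt (fun z' => ∑ s, A s z' * B s z')
      (∑ s, (A s z • fderiv ℝ (B s) z + B s z • fderiv ℝ (A s) z)) z :=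
    HasFDerivAt.fun_sum fun s _ => (hA s).hasFDerivAt.mul (hB s).hasFDerivAt
  rw [pd_eval h]
  simp [pd, smul_eq_mul]

lemma pd_const (r : ℝ) (z : EE n) (k : Fin n) : pd k (fun _ => r) z = 0 := by
  rw [pd_eval (hasFDerivAt_const r z) k]; rfl

lemma differentiableAt_det {M : EE n → Matrix (Fin n) (Fin n) ℝ} {z : EE n}
    (h : ∀ a b, DifferentiableAt ℝ (fun z' => M z' a b) z) :
    DifferentiableAt ℝ (fun z' => (M z').det) z := by
  simp only [Matrix.det_apply, Units.smul_def, zsmul_eq_mul]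
  apply DifferentiableAt.fun_sum
  intro σ _
  exact (HasFDerivAt.finset_prod (fun i _ => (h (σ i) i).hasFDerivAt)).differentiableAt.const_mul _

lemma differentiableAt_adjugate {M : EE n → Matrix (Fin n) (Fin n) ℝ} {z : EE n}
    (h : ∀ a b, DifferentiableAt ℝ (fun z' => M z' a b) z) (a b : Fin n) :
    DifferentiableAt ℝ (fun z' => (M z').adjugate a b) z := by
  simp only [Matrix.adjugate_apply]
  apply differentiableAt_det
  intro a' b'
  by_cases ha : a' = b
  · subst ha; simp [Matrix.updateRow_self]
  · simp only [Matrix.updateRow_ne ha]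
    exact h a' b'

lemma differentiableAt_inv_entry {M : EE n → Matrix (Fin n) (Fin n) ℝ} {z : EE n}
    (h : ∀ a b, DifferentiableAt ℝ (fun z' => M z' a b) z)
    (hdet : (M z).det ≠ 0) (a b : Fin n) :
    DifferentiableAt ℝ (fun z' => (M z')⁻¹ a b) z := by
  have : (fun z' => (M z')⁻¹ a b) = fun z' => ((M z').det)⁻¹ * (M z').adjugate a b := by
    funext z'
    rw [Matrix.inv_def]
    simp [Ring.inverse_eq_inv']
  rw [this]
  exact ((differentiableAt_det h).inv hdet).mul (differentiableAt_adjugate h a b)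

section main
variable {c : (Fin n → ℝ) → (Fin n → ℝ) → ℝ} {Y : (Fin n → ℝ) → (Fin n → ℝ) → (Fin n → ℝ)}
  {x : EE n}

-- smoothness of z ↦ Y x z
lemma Phi_smooth (hYs : ContDiff ℝ (⊤ : ℕ∞) fun p : (Fin n → ℝ) × (Fin n → ℝ) => Y p.1 p.2) :
    ContDiff ℝ (⊤ : ℕ∞) (Y x) := by
  have : (Y x) = (fun p : EE n × EE n => Y p.1 p.2) ∘ (fun z => (x, z)) := rfl
  rw [this]
  exact hYs.comp (contDiff_const.prodMk contDiff_id)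

lemma comp_smooth {F : EE n × EE n → ℝ} (hF : ContDiff ℝ (⊤ : ℕ∞) F)
    (hΦ : ContDiff ℝ (⊤ : ℕ∞) (Y x)) :
    ContDiff ℝ (⊤ : ℕ∞) (fun z => F (x, Y x z)) :=
  hF.comp (contDiff_const.prodMk hΦ)

variable (hc : ContDiff ℝ (⊤ : ℕ∞) (CC c))
  (hΦ : ContDiff ℝ (⊤ : ℕ∞) (Y x))
  (hY : ∀ z : Fin n → ℝ, Dx c x (Y x z) = z)
  (hA2 : ∀ x' y' : Fin n → ℝ, (mixHess c x' y').det ≠ 0)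

include hc hΦ hY in
lemma hess_mul_J (z : EE n) : mixHess c x (Y x z) * Jm (Y x) z = 1 := by
  ext q l
  rw [Matrix.mul_apply, Matrix.one_apply]
  have hdd : DifferentiableAt ℝ (Dd (uu q) (CC c)) (x, Y x z) :=
    ((Dd_contDiff hc (uu q)).differentiable (by simp)).differentiableAt
  have h1 : pd l (fun z' => Dd (uu q) (CC c) (x, Y x z')) z
      = ∑ s, Jm (Y x) z s l * Dd (vv s) (Dd (uu q) (CC c)) (x, Y x z) :=
    pd_comp_Phi (hΦ.differentiable (by simp)).differentiableAt hdd l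
  have h2 : (fun z' => Dd (uu q) (CC c) (x, Y x z')) = fun z' => z' q := by
    funext z'
    rw [← Dx_eq hc x (Y x z') q, hY z']
  have h3 : pd l (fun z' : EE n => z' q) z = (if q = l then (1:ℝ) else 0) := by
    have := pd_eval (x := z) (ContinuousLinearMap.proj (R := ℝ) (φ := fun _ : Fin n => ℝ) q).hasFDerivAt l
    simp only [ContinuousLinearMap.proj_apply] at this
    rw [show (fun z' : EE n => z' q) = ⇑(ContinuousLinearMap.proj (R := ℝ) (φ := fun _ : Fin n => ℝ) q) from rfl, this]
    simp [Pi.single_apply]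
  rw [h2, h3] at h1
  rw [h1]
  refine Finset.sum_congr rfl fun s _ => ?_
  rw [mixHess_eq hc x (Y x z) q s, mul_comm]

include hc hΦ hY hA2 in
lemma J_eq_inv (z : EE n) : mixInv c x (Y x z) = Jm (Y x) z :=
  Matrix.inv_eq_right_inv (hess_mul_J hc hΦ hY z)

include hc hΦ hY hA2 in
lemma pdl_cxx (i j l : Fin n) (z : EE n) :
    pd l (fun z' => cxx c x (Y x z') i j) z
      = ∑ s, cxxy c x (Y x z) i j s * mixInv c x (Y x z) s l := by
  have hfun : (fun z' => cxx c x (Y x z') i j)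
      = fun z' => Dd (uu i) (Dd (uu j) (CC c)) (x, Y x z') := by
    funext z'; exact cxx_eq hc x (Y x z') i j
  rw [hfun, pd_comp_Phi (hΦ.differentiable (by simp)).differentiableAt
    (((Dd_contDiff (Dd_contDiff hc (uu j)) (uu i)).differentiable
      (by simp)).differentiableAt) l]
  refine Finset.sum_congr rfl fun s _ => ?_
  rw [← cxxy_eq hc x (Y x z) i j s, ← J_eq_inv hc hΦ hY hA2 z, mul_comm]

include hc hΦ hY hA2 in
lemma pdk_hess (b q k : Fin n) (z : EE n) :
    pd k (fun z' => mixHess c x (Y x z') b q) z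
      = ∑ t, mixInv c x (Y x z) t k * cxyy c x (Y x z) b q t := by
  have hfun : (fun z' => mixHess c x (Y x z') b q)
      = fun z' => Dd (vv q) (Dd (uu b) (CC c)) (x, Y x z') := by
    funext z'; exact mixHess_eq hc x (Y x z') b q
  rw [hfun, pd_comp_Phi (hΦ.differentiable (by simp)).differentiableAt
    (((Dd_contDiff (Dd_contDiff hc (uu b)) (vv q)).differentiable
      (by simp)).differentiableAt) k]
  refine Finset.sum_congr rfl fun t _ => ?_
  rw [← cxyy_eq hc x (Y x z) b q t, ← J_eq_inv hc hΦ hY hA2 z]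

include hc hΦ hY hA2 in
lemma pdk_cxxy (i j s k : Fin n) (z : EE n) :
    pd k (fun z' => cxxy c x (Y x z') i j s) z
      = ∑ t, mixInv c x (Y x z) t k * cxxyy c x (Y x z) i j s t := by
  have hfun : (fun z' => cxxy c x (Y x z') i j s)
      = fun z' => Dd (vv s) (Dd (uu i) (Dd (uu j) (CC c))) (x, Y x z') := by
    funext z'; exact cxxy_eq hc x (Y x z') i j s
  rw [hfun, pd_comp_Phi (hΦ.differentiable (by simp)).differentiableAt
    (((Dd_contDiff (Dd_contDiff (Dd_contDiff hc (uu j)) (uu i)) (vv s)).differentiable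
      (by simp)).differentiableAt) k]
  refine Finset.sum_congr rfl fun t _ => ?_
  rw [← cxxyy_eq hc x (Y x z) i j s t, ← J_eq_inv hc hΦ hY hA2 z]

include hc hΦ in
lemma diff_hess_entry (a b : Fin n) (z : EE n) :
    DifferentiableAt ℝ (fun z' => mixHess c x (Y x z') a b) z := by
  have hfun : (fun z' => mixHess c x (Y x z') a b)
      = fun z' => Dd (vv b) (Dd (uu a) (CC c)) (x, Y x z') := by
    funext z'; exact mixHess_eq hc x (Y x z') a b
  rw [hfun]
  exact ((comp_smooth (Dd_contDiff (Dd_contDiff hc (uu a)) (vv b)) hΦ).differentiable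
    (by simp)).differentiableAt

include hc hΦ hA2 in
lemma diff_inv_entry (a b : Fin n) (z : EE n) :
    DifferentiableAt ℝ (fun z' => mixInv c x (Y x z') a b) z := by
  exact differentiableAt_inv_entry (M := fun z' => mixHess c x (Y x z'))
    (fun a' b' => diff_hess_entry hc hΦ a' b' z) (hA2 x (Y x z)) a b

include hc hΦ hY hA2 in
lemma pdk_inv_entry (k a l : Fin n) (z : EE n) :
    pd k (fun z' => mixInv c x (Y x z') a l) z
      = -∑ q, (∑ b, mixInv c x (Y x z) a b
            * pd k (fun z' => mixHess c x (Y x z') b q) z) * mixInv c x (Y x z) q l := by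
  classical
  set M0 := mixHess c x (Y x z) with hM0
  set N0 := mixInv c x (Y x z) with hN0
  set P : Matrix (Fin n) (Fin n) ℝ :=
    Matrix.of fun a' b' => pd k (fun z' => mixInv c x (Y x z') a' b') z with hP
  set Q : Matrix (Fin n) (Fin n) ℝ :=
    Matrix.of fun b' q' => pd k (fun z' => mixHess c x (Y x z') b' q') z with hQ
  have hconst : ∀ a' q' : Fin n,
      (fun z' => ∑ b, mixInv c x (Y x z') a' b * mixHess c x (Y x z') b q')
        = fun _ => (1 : Matrix (Fin n) (Fin n) ℝ) a' q' := by
    intro a' q'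
    funext z'
    have : mixInv c x (Y x z') * mixHess c x (Y x z') = 1 :=
      Matrix.nonsing_inv_mul _ (isUnit_iff_ne_zero.mpr (hA2 x (Y x z')))
    rw [← this, Matrix.mul_apply]
  have heq : N0 * Q + P * M0 = 0 := by
    ext a' q'
    have h0 : pd k (fun z' => ∑ b, mixInv c x (Y x z') a' b * mixHess c x (Y x z') b q') z
        = 0 := by
      rw [hconst a' q']; exact pd_const _ z k
    rw [pd_sum_mul (fun b => diff_inv_entry hc hΦ hA2 a' b z)
      (fun b => diff_hess_entry hc hΦ b q' z) k] at h0
    simp only [Matrix.add_apply, Matrix.mul_apply, Matrix.zero_apply]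
    rw [← h0]
    rw [← Finset.sum_add_distrib]
    refine Finset.sum_congr rfl fun b _ => ?_
    simp only [hN0, hM0, hP, hQ, Matrix.of_apply]
    ring
  have hPM : P = -(N0 * Q * N0) := by
    have h1 : P * M0 = -(N0 * Q) := by
      rw [eq_neg_iff_add_eq_zero, add_comm]; exact heq
    have h2 : M0 * N0 = 1 :=
      Matrix.mul_nonsing_inv _ (isUnit_iff_ne_zero.mpr (hA2 x (Y x z)))
    calc P = P * (M0 * N0) := by rw [h2, Matrix.mul_one]
    _ = (P * M0) * N0 := by rw [Matrix.mul_assoc]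
    _ = -(N0 * Q) * N0 := by rw [h1]
    _ = -(N0 * Q * N0) := by rw [Matrix.neg_mul]
  have := congrFun (congrFun (congrArg (fun M : Matrix (Fin n) (Fin n) ℝ => (M : Fin n → Fin n → ℝ)) hPM) a) l
  simp only [hP, Matrix.of_apply, Matrix.neg_apply, Matrix.mul_apply] at this
  rw [this, neg_inj]
  exact Finset.sum_congr rfl fun q' _ => rfl


include hc in
lemma cxxyy_symm' (y : EE n) (i j r s : Fin n) :
    cxxyy c x y i j r s = cxxyy c x y i j s r := by
  rw [cxxyy_eq hc, cxxyy_eq hc]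
  exact Dd_comm (Dd_contDiff (Dd_contDiff hc (uu j)) (uu i)) (vv s) (vv r) (x, y)

include hc in
lemma cxyy_symm' (y : EE n) (q r s : Fin n) :
    cxyy c x y q r s = cxyy c x y q s r := by
  rw [cxyy_eq hc, cxyy_eq hc]
  exact Dd_comm (Dd_contDiff hc (uu q)) (vv s) (vv r) (x, y)

include hc hΦ in
lemma diff_cxxy_entry (i j s : Fin n) (z : EE n) :
    DifferentiableAt ℝ (fun z' => cxxy c x (Y x z') i j s) z := by
  have hfun : (fun z' => cxxy c x (Y x z') i j s)
      = fun z' => Dd (vv s) (Dd (uu i) (Dd (uu j) (CC c))) (x, Y x z') := by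
    funext z'; exact cxxy_eq hc x (Y x z') i j s
  rw [hfun]
  exact ((comp_smooth (Dd_contDiff (Dd_contDiff (Dd_contDiff hc (uu j)) (uu i)) (vv s)) hΦ).differentiable
    (by simp)).differentiableAt

include hc hΦ hY hA2 in
lemma key_ident (i j k l : Fin n) (z : EE n) :
    pd k (fun z' => pd l (fun z'' => cxx c x (Y x z'') i j) z') z
      = -∑ r, ∑ s,
          ((∑ p, ∑ q, mixInv c x (Y x z) p q * cxxy c x (Y x z) i j p
              * cxyy c x (Y x z) q r s)
            - cxxyy c x (Y x z) i j r s)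
          * mixInv c x (Y x z) r k * mixInv c x (Y x z) s l := by
  classical
  have hfun : (fun z' => pd l (fun z'' => cxx c x (Y x z'') i j) z')
      = fun z' => ∑ s, cxxy c x (Y x z') i j s * mixInv c x (Y x z') s l := by
    funext z'; exact pdl_cxx hc hΦ hY hA2 i j l z'
  rw [hfun, pd_sum_mul (fun s => diff_cxxy_entry hc hΦ i j s z)
    (fun s => diff_inv_entry hc hΦ hA2 s l z) k]
  simp only [pdk_inv_entry hc hΦ hY hA2, pdk_cxxy hc hΦ hY hA2, pdk_hess hc hΦ hY hA2]
  -- abbreviations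
  set N := mixInv c x (Y x z) with hN
  set W := Y x z with hW
  -- split sum
  rw [Finset.sum_add_distrib]
  have hA : (∑ s, N s l * ∑ t, N t k * cxxyy c x W i j s t)
      = ∑ r, ∑ s, cxxyy c x W i j r s * N r k * N s l := by
    calc (∑ s, N s l * ∑ t, N t k * cxxyy c x W i j s t)
        = ∑ s, ∑ t, N s l * (N t k * cxxyy c x W i j s t) := by
          simp only [Finset.mul_sum]
    _ = ∑ t, ∑ s, N s l * (N t k * cxxyy c x W i j s t) := Finset.sum_comm
    _ = ∑ r, ∑ s, cxxyy c x W i j r s * N r k * N s l := by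
        refine Finset.sum_congr rfl fun t _ => Finset.sum_congr rfl fun s _ => ?_
        rw [cxxyy_symm' hc W i j s t]; ring
  have hB : (∑ s, cxxy c x W i j s *
        -∑ q, (∑ b, N s b * ∑ t, N t k * cxyy c x W b q t) * N q l)
      = -∑ r, ∑ s, (∑ p, ∑ q, N p q * cxxy c x W i j p * cxyy c x W q r s)
          * N r k * N s l := by
    have lhs1 : (∑ s, cxxy c x W i j s *
        -∑ q, (∑ b, N s b * ∑ t, N t k * cxyy c x W b q t) * N q l)
        = -∑ s, ∑ q, ∑ b, ∑ t,
            cxxy c x W i j s * N s b * N t k * cxyy c x W b q t * N q l := by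
      simp only [mul_neg, Finset.mul_sum, Finset.sum_mul, Finset.sum_neg_distrib]
      refine neg_inj.mpr ?_
      refine Finset.sum_congr rfl fun s _ => Finset.sum_congr rfl fun q _ =>
        Finset.sum_congr rfl fun b _ => Finset.sum_congr rfl fun t _ => ?_
      ring
    have reord : (∑ s, ∑ q, ∑ b, ∑ t : Fin n,
            cxxy c x W i j s * N s b * N t k * cxyy c x W b q t * N q l)
        = ∑ t, ∑ q, ∑ s, ∑ b : Fin n,
            cxxy c x W i j s * N s b * N t k * cxyy c x W b q t * N q l := by
      calc (∑ s, ∑ q, ∑ b, ∑ t : Fin n,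
            cxxy c x W i j s * N s b * N t k * cxyy c x W b q t * N q l)
          = ∑ s, ∑ q, ∑ t, ∑ b : Fin n,
            cxxy c x W i j s * N s b * N t k * cxyy c x W b q t * N q l :=
          Finset.sum_congr rfl fun s _ => Finset.sum_congr rfl fun q _ => Finset.sum_comm
      _ = ∑ s, ∑ t, ∑ q, ∑ b : Fin n,
            cxxy c x W i j s * N s b * N t k * cxyy c x W b q t * N q l :=
          Finset.sum_congr rfl fun s _ => Finset.sum_comm
      _ = ∑ t, ∑ s, ∑ q, ∑ b : Fin n,
            cxxy c x W i j s * N s b * N t k * cxyy c x W b q t * N q l :=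
          Finset.sum_comm
      _ = ∑ t, ∑ q, ∑ s, ∑ b : Fin n,
            cxxy c x W i j s * N s b * N t k * cxyy c x W b q t * N q l :=
          Finset.sum_congr rfl fun t _ => Finset.sum_comm
    have rhs1 : (∑ r, ∑ s, (∑ p, ∑ q, N p q * cxxy c x W i j p * cxyy c x W q r s)
          * N r k * N s l)
        = ∑ r, ∑ s, ∑ p, ∑ q,
            N p q * cxxy c x W i j p * cxyy c x W q r s * N r k * N s l := by
      simp only [Finset.sum_mul]
    rw [lhs1, reord, rhs1, neg_inj]
    refine Finset.sum_congr rfl fun t _ => Finset.sum_congr rfl fun q _ =>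
      Finset.sum_congr rfl fun s _ => Finset.sum_congr rfl fun b _ => ?_
    rw [cxyy_symm' hc W b q t]
    ring
  have hR : (-∑ r, ∑ s,
          ((∑ p, ∑ q, N p q * cxxy c x W i j p * cxyy c x W q r s)
            - cxxyy c x W i j r s) * N r k * N s l)
      = (∑ r, ∑ s, cxxyy c x W i j r s * N r k * N s l)
        - ∑ r, ∑ s, (∑ p, ∑ q, N p q * cxxy c x W i j p * cxyy c x W q r s)
            * N r k * N s l := by
    have : (∑ r, ∑ s,
          ((∑ p, ∑ q, N p q * cxxy c x W i j p * cxyy c x W q r s)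
            - cxxyy c x W i j r s) * N r k * N s l)
        = ∑ r, ∑ s,
          ((∑ p, ∑ q, N p q * cxxy c x W i j p * cxyy c x W q r s) * N r k * N s l
            - cxxyy c x W i j r s * N r k * N s l) := by
      refine Finset.sum_congr rfl fun r _ => Finset.sum_congr rfl fun s _ => ?_
      ring
    rw [this]
    simp only [Finset.sum_sub_distrib]
    rw [neg_sub]
  rw [hB, hA, hR]
  ring

end main

end Statement4Helpers

/-- Equivalence of formulation (1.8) of condition (A3) with the formulation
(1.9) in terms of second `z`-derivatives of `c_{ij}(x, y(x,z))`. -/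
theorem statement4
    {n : ℕ} (hn : 2 ≤ n)
    (c : (Fin n → ℝ) → (Fin n → ℝ) → ℝ)
    (hc : SmoothCost c) (hA1 : A1 c) (hA2 : A2 c)
    (Y : (Fin n → ℝ) → (Fin n → ℝ) → (Fin n → ℝ))
    (hY : ∀ x z : Fin n → ℝ, Dx c x (Y x z) = z)
    (hYs : ContDiff ℝ (⊤ : ℕ∞) fun p : (Fin n → ℝ) × (Fin n → ℝ) => Y p.1 p.2)
    (x y : Fin n → ℝ) (c₀ : ℝ) (hc₀ : 0 ≤ c₀) :
    A3at c c₀ x y ↔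
      ∀ ξ η : Fin n → ℝ, (∑ i : Fin n, ξ i * η i) = 0 →
        (∑ i : Fin n, ∑ j : Fin n, ∑ k : Fin n, ∑ l : Fin n,
            pd k (fun z => pd l (fun z' => cxx c x (Y x z') i j) z) (Dx c x y)
              * ξ i * ξ j * η k * η l)
          ≤ -(c₀ * (∑ i : Fin n, ξ i ^ 2) * (∑ i : Fin n, η i ^ 2)) := by
  have hC : ContDiff ℝ (⊤ : ℕ∞) (CC c) := hc
  have hΦ : ContDiff ℝ (⊤ : ℕ∞) (Y x) := Phi_smooth hYs
  have hA2' : ∀ x' y' : Fin n → ℝ, (mixHess c x' y').det ≠ 0 := hA2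
  have hY' : ∀ z : Fin n → ℝ, Dx c x (Y x z) = z := hY x
  have hYz0 : Y x (Dx c x y) = y := (hA1.1 x (Dx c x y)).unique (hY x (Dx c x y)) rfl
  have keyY : ∀ i j k l : Fin n,
      pd k (fun z => pd l (fun z' => cxx c x (Y x z') i j) z) (Dx c x y)
        = -∑ r, ∑ s,
            ((∑ p, ∑ q, mixInv c x y p q * cxxy c x y i j p * cxyy c x y q r s)
              - cxxyy c x y i j r s)
            * mixInv c x y r k * mixInv c x y s l := by
    intro i j k l
    have := key_ident hC hΦ hY' hA2' i j k l (Dx c x y)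
    rwa [hYz0] at this
  have sums_eq : ∀ ξ η : Fin n → ℝ,
      (∑ i : Fin n, ∑ j : Fin n, ∑ k : Fin n, ∑ l : Fin n,
          pd k (fun z => pd l (fun z' => cxx c x (Y x z') i j) z) (Dx c x y)
            * ξ i * ξ j * η k * η l)
        = -(∑ i : Fin n, ∑ j : Fin n, ∑ k : Fin n, ∑ l : Fin n, ∑ r : Fin n, ∑ s : Fin n,
            ((∑ p : Fin n, ∑ q : Fin n,
                mixInv c x y p q * cxxy c x y i j p * cxyy c x y q r s)
              - cxxyy c x y i j r s)
            * mixInv c x y r k * mixInv c x y s l * ξ i * ξ j * η k * η l) := by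
    intro ξ η
    have per : ∀ i j k l : Fin n,
        pd k (fun z => pd l (fun z' => cxx c x (Y x z') i j) z) (Dx c x y)
            * ξ i * ξ j * η k * η l
          = -∑ r : Fin n, ∑ s : Fin n,
              ((∑ p : Fin n, ∑ q : Fin n,
                  mixInv c x y p q * cxxy c x y i j p * cxyy c x y q r s)
                - cxxyy c x y i j r s)
              * mixInv c x y r k * mixInv c x y s l * ξ i * ξ j * η k * η l := by
      intro i j k l
      rw [keyY i j k l, neg_mul, neg_mul, neg_mul, neg_mul, neg_inj]
      simp only [Finset.sum_mul]
    calc (∑ i : Fin n, ∑ j : Fin n, ∑ k : Fin n, ∑ l : Fin n,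
          pd k (fun z => pd l (fun z' => cxx c x (Y x z') i j) z) (Dx c x y)
            * ξ i * ξ j * η k * η l)
        = ∑ i : Fin n, ∑ j : Fin n, ∑ k : Fin n, ∑ l : Fin n,
            -∑ r : Fin n, ∑ s : Fin n,
              ((∑ p : Fin n, ∑ q : Fin n,
                  mixInv c x y p q * cxxy c x y i j p * cxyy c x y q r s)
                - cxxyy c x y i j r s)
              * mixInv c x y r k * mixInv c x y s l * ξ i * ξ j * η k * η l := by
          exact Finset.sum_congr rfl fun i _ => Finset.sum_congr rfl fun j _ =>
            Finset.sum_congr rfl fun k _ => Finset.sum_congr rfl fun l _ => per i j k l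
    _ = _ := by simp only [Finset.sum_neg_distrib]
  constructor
  · intro h ξ η horth
    have h1 := h ξ η horth
    rw [sums_eq ξ η]
    linarith
  · intro h ξ η horth
    have h1 := h ξ η horth
    rw [sums_eq ξ η] at h1
    linarith
end
end

section
/- Suppose the smooth cost function c satisfies (A1), (A2), and (A3) with some constant c₀ > 0 at every pair (x,y) ∈ ℝⁿ × ℝⁿ. Let Ω ⊂ ℝⁿ be a bounded domain with C² boundary that is c-convex with respect to a bounded domain Ω* ⊂ ℝⁿ, i.e. {D_y c(x,y) : x ∈ Ω} is convex for each y ∈ Ω*. For y₀, y₁ in the closure of Ω* and a ∈ ℝ, set U_{y₀,y₁,a} = {x ∈ ℝⁿ : c(x,y₀) < c(x,y₁) + a}. Then Ω equals the intersection of all sets U_{y₀,y₁,a}, taken over all y₀, y₁ in the closure of Ω* and all a ∈ ℝ such that Ω ⊂ U_{y₀,y₁,a}. -/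
open Set Filter Topology MeasureTheory
open scoped BigOperators

noncomputable section

namespace S11

open ContinuousLinearMap

variable {n : ℕ}

/-- Pairing representation of a continuous linear functional on `Fin n → ℝ`. -/
theorem clm_sum_repr (f : (Fin n → ℝ) →L[ℝ] ℝ) (w : Fin n → ℝ) :
    f w = ∑ j, w j * f (Pi.single j 1) := by
  have hw : w = ∑ j, (w j) • (Pi.single j 1 : Fin n → ℝ) := by
    ext k
    rw [Finset.sum_apply]
    simp [Pi.single_apply]
  conv_lhs => rw [hw]
  rw [map_sum]
  simp [smul_eq_mul]

/-- Pairing representation in the second component of a product. -/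
theorem clm_sum_repr_inr (f : ((Fin n → ℝ) × (Fin n → ℝ)) →L[ℝ] ℝ) (w : Fin n → ℝ) :
    f ((0 : Fin n → ℝ), w) = ∑ j, w j * f ((0 : Fin n → ℝ), Pi.single j 1) := by
  have : ((0 : Fin n → ℝ), w) = (ContinuousLinearMap.inr ℝ (Fin n → ℝ) (Fin n → ℝ)) w := rfl
  rw [this, ← ContinuousLinearMap.comp_apply, clm_sum_repr]
  rfl

theorem clm_sum_repr_inl (f : ((Fin n → ℝ) × (Fin n → ℝ)) →L[ℝ] ℝ) (w : Fin n → ℝ) :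
    f (w, (0 : Fin n → ℝ)) = ∑ j, w j * f (Pi.single j 1, (0 : Fin n → ℝ)) := by
  have : (w, (0 : Fin n → ℝ)) = (ContinuousLinearMap.inl ℝ (Fin n → ℝ) (Fin n → ℝ)) w := rfl
  rw [this, ← ContinuousLinearMap.comp_apply, clm_sum_repr]
  rfl

section Cost

variable (c : (Fin n → ℝ) → (Fin n → ℝ) → ℝ)

/-- First derivative of the joint cost. -/
def DcU : (Fin n → ℝ) × (Fin n → ℝ) → ((Fin n → ℝ) × (Fin n → ℝ)) →L[ℝ] ℝ :=
  fderiv ℝ (fun p : (Fin n → ℝ) × (Fin n → ℝ) => c p.1 p.2)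

/-- Second derivative of the joint cost. -/
def SD : (Fin n → ℝ) × (Fin n → ℝ) →
    ((Fin n → ℝ) × (Fin n → ℝ)) →L[ℝ] ((Fin n → ℝ) × (Fin n → ℝ)) →L[ℝ] ℝ :=
  fderiv ℝ (DcU c)

variable {c}

theorem winf_succ_le : ((⊤:ℕ∞) : WithTop ℕ∞) + 1 ≤ ((⊤:ℕ∞) : WithTop ℕ∞) := by simp

theorem one_le_winf : (1 : WithTop ℕ∞) ≤ ((⊤:ℕ∞) : WithTop ℕ∞) := by simp

theorem smooth_DcU (hc : SmoothCost c) : ContDiff ℝ (⊤ : ℕ∞) (DcU c) :=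
  (hc : ContDiff ℝ (⊤:ℕ∞) _).fderiv_right winf_succ_le

theorem smooth_SD (hc : SmoothCost c) : ContDiff ℝ (⊤ : ℕ∞) (SD c) :=
  (smooth_DcU hc).fderiv_right winf_succ_le

theorem hasFDerivAt_cU (hc : SmoothCost c) (p : (Fin n → ℝ) × (Fin n → ℝ)) :
    HasFDerivAt (fun p : (Fin n → ℝ) × (Fin n → ℝ) => c p.1 p.2) (DcU c p) p :=
  ((hc : ContDiff ℝ (⊤:ℕ∞) _).differentiable (by simp) p).hasFDerivAt

theorem hasFDerivAt_DcU (hc : SmoothCost c) (p : (Fin n → ℝ) × (Fin n → ℝ)) :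
    HasFDerivAt (DcU c) (SD c p) p :=
  ((smooth_DcU hc).differentiable (by simp) p).hasFDerivAt

theorem SD_symm (hc : SmoothCost c) (p : (Fin n → ℝ) × (Fin n → ℝ))
    (v w : (Fin n → ℝ) × (Fin n → ℝ)) : SD c p v w = SD c p w v :=
  second_derivative_symmetric (hasFDerivAt_cU hc) (hasFDerivAt_DcU hc p) v w

theorem hasFDerivAt_sliceY (hc : SmoothCost c) (x y : Fin n → ℝ) :
    HasFDerivAt (fun y' => c x y')
      ((DcU c (x, y)).comp (ContinuousLinearMap.inr ℝ (Fin n → ℝ) (Fin n → ℝ))) y := by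
  have h1 : HasFDerivAt (fun y' : Fin n → ℝ => ((x, y') : (Fin n → ℝ) × (Fin n → ℝ)))
      (ContinuousLinearMap.inr ℝ (Fin n → ℝ) (Fin n → ℝ)) y :=
    HasFDerivAt.prodMk (hasFDerivAt_const x y) (hasFDerivAt_id y)
  exact (hasFDerivAt_cU hc (x, y)).comp y h1

theorem hasFDerivAt_sliceX (hc : SmoothCost c) (x y : Fin n → ℝ) :
    HasFDerivAt (fun x' => c x' y)
      ((DcU c (x, y)).comp (ContinuousLinearMap.inl ℝ (Fin n → ℝ) (Fin n → ℝ))) x := by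
  have h1 : HasFDerivAt (fun x' : Fin n → ℝ => ((x', y) : (Fin n → ℝ) × (Fin n → ℝ)))
      (ContinuousLinearMap.inl ℝ (Fin n → ℝ) (Fin n → ℝ)) x :=
    HasFDerivAt.prodMk (hasFDerivAt_id x) (hasFDerivAt_const y x)
  exact (hasFDerivAt_cU hc (x, y)).comp x h1

theorem Dy_eq (hc : SmoothCost c) (x y : Fin n → ℝ) (j : Fin n) :
    Dy c x y j = DcU c (x, y) ((0 : Fin n → ℝ), Pi.single j 1) := by
  show fderiv ℝ (fun y' => c x y') y (Pi.single j 1) = _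
  rw [(hasFDerivAt_sliceY hc x y).fderiv]
  rfl

theorem Dx_eq (hc : SmoothCost c) (x y : Fin n → ℝ) (i : Fin n) :
    Dx c x y i = DcU c (x, y) (Pi.single i 1, (0 : Fin n → ℝ)) := by
  show fderiv ℝ (fun x' => c x' y) x (Pi.single i 1) = _
  rw [(hasFDerivAt_sliceX hc x y).fderiv]
  rfl

end Cost

end S11
namespace S11

open ContinuousLinearMap

variable {n : ℕ} {c : (Fin n → ℝ) → (Fin n → ℝ) → ℝ}

/-- The derivative of `x ↦ Dy c x y` at `x`. -/
def DTclm (c : (Fin n → ℝ) → (Fin n → ℝ) → ℝ) (x y : Fin n → ℝ) :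
    (Fin n → ℝ) →L[ℝ] (Fin n → ℝ) :=
  ContinuousLinearMap.pi fun j =>
    ((SD c (x, y)).flip ((0 : Fin n → ℝ), Pi.single j 1)).comp
      (ContinuousLinearMap.inl ℝ (Fin n → ℝ) (Fin n → ℝ))

/-- The derivative of `y ↦ Dx c x y` at `y`. -/
def DFclm (c : (Fin n → ℝ) → (Fin n → ℝ) → ℝ) (x y : Fin n → ℝ) :
    (Fin n → ℝ) →L[ℝ] (Fin n → ℝ) :=
  ContinuousLinearMap.pi fun i =>
    ((SD c (x, y)).flip (Pi.single i 1, (0 : Fin n → ℝ))).comp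
      (ContinuousLinearMap.inr ℝ (Fin n → ℝ) (Fin n → ℝ))

theorem DTclm_apply (x y v : Fin n → ℝ) (j : Fin n) :
    DTclm c x y v j = SD c (x, y) (v, 0) ((0 : Fin n → ℝ), Pi.single j 1) := by
  simp [DTclm, ContinuousLinearMap.pi_apply]

theorem DFclm_apply (x y w : Fin n → ℝ) (i : Fin n) :
    DFclm c x y w i = SD c (x, y) (0, w) (Pi.single i 1, (0 : Fin n → ℝ)) := by
  simp [DFclm, ContinuousLinearMap.pi_apply]

theorem hasFDerivAt_T (hc : SmoothCost c) (x y : Fin n → ℝ) :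
    HasFDerivAt (fun x' => Dy c x' y) (DTclm c x y) x := by
  apply hasFDerivAt_pi''
  intro j
  have hrw : (fun x' => Dy c x' y j)
      = fun x' => (DcU c (x', y)) ((0 : Fin n → ℝ), Pi.single j 1) :=
    funext fun x' => Dy_eq hc x' y j
  rw [hrw]
  have h1 : HasFDerivAt (fun x' : Fin n → ℝ => ((x', y) : (Fin n → ℝ) × (Fin n → ℝ)))
      (ContinuousLinearMap.inl ℝ (Fin n → ℝ) (Fin n → ℝ)) x :=
    HasFDerivAt.prodMk (hasFDerivAt_id x) (hasFDerivAt_const y x)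
  have h3 : HasFDerivAt (fun x' => DcU c (x', y))
      ((SD c (x, y)).comp (ContinuousLinearMap.inl ℝ (Fin n → ℝ) (Fin n → ℝ))) x :=
    (hasFDerivAt_DcU hc (x, y)).comp x h1
  have h4 := h3.clm_apply
    (hasFDerivAt_const ((0 : Fin n → ℝ), Pi.single j 1) x)
  convert h4 using 1
  ext u
  simp [DTclm]

theorem hasFDerivAt_F (hc : SmoothCost c) (x y : Fin n → ℝ) :
    HasFDerivAt (fun y' => Dx c x y') (DFclm c x y) y := by
  apply hasFDerivAt_pi''
  intro i
  have hrw : (fun y' => Dx c x y' i)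
      = fun y' => (DcU c (x, y')) (Pi.single i 1, (0 : Fin n → ℝ)) :=
    funext fun y' => Dx_eq hc x y' i
  rw [hrw]
  have h1 : HasFDerivAt (fun y' : Fin n → ℝ => ((x, y') : (Fin n → ℝ) × (Fin n → ℝ)))
      (ContinuousLinearMap.inr ℝ (Fin n → ℝ) (Fin n → ℝ)) y :=
    HasFDerivAt.prodMk (hasFDerivAt_const x y) (hasFDerivAt_id y)
  have h3 : HasFDerivAt (fun y' => DcU c (x, y'))
      ((SD c (x, y)).comp (ContinuousLinearMap.inr ℝ (Fin n → ℝ) (Fin n → ℝ))) y :=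
    (hasFDerivAt_DcU hc (x, y)).comp y h1
  have h4 := h3.clm_apply
    (hasFDerivAt_const (Pi.single i 1, (0 : Fin n → ℝ)) y)
  convert h4 using 1
  ext u
  simp [DFclm]

theorem mixHess_eq (hc : SmoothCost c) (x y : Fin n → ℝ) (i j : Fin n) :
    mixHess c x y i j
      = SD c (x, y) ((0 : Fin n → ℝ), Pi.single j 1) (Pi.single i 1, (0 : Fin n → ℝ)) := by
  show fderiv ℝ (fun y' => Dx c x y' i) y (Pi.single j 1) = _
  have : fderiv ℝ (fun y' => Dx c x y' i) y
      = (ContinuousLinearMap.proj (R := ℝ) (φ := fun _ : Fin n => ℝ) i).comp (DFclm c x y) :=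
    (hasFDerivAt_pi'.mp (hasFDerivAt_F hc x y) i).fderiv
  rw [this]
  simp [DFclm_apply]

theorem mixHess_eq' (hc : SmoothCost c) (x y : Fin n → ℝ) (i j : Fin n) :
    mixHess c x y i j
      = SD c (x, y) (Pi.single i 1, (0 : Fin n → ℝ)) ((0 : Fin n → ℝ), Pi.single j 1) := by
  rw [mixHess_eq hc, SD_symm hc]

/-- The key symmetry relation between the two mixed derivatives. -/
theorem pairing_symm (hc : SmoothCost c) (x y v w : Fin n → ℝ) :
    ∑ j, (DTclm c x y v) j * w j = ∑ i, (DFclm c x y w) i * v i := by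
  have h1 : ∑ j, (DTclm c x y v) j * w j = SD c (x, y) (v, 0) (0, w) := by
    rw [clm_sum_repr_inr (SD c (x, y) (v, 0)) w]
    apply Finset.sum_congr rfl
    intro j _
    rw [DTclm_apply, mul_comm]
  have h2 : ∑ i, (DFclm c x y w) i * v i = SD c (x, y) (0, w) (v, 0) := by
    rw [clm_sum_repr_inl (SD c (x, y) (0, w)) v]
    apply Finset.sum_congr rfl
    intro i _
    rw [DFclm_apply, mul_comm]
  rw [h1, h2, SD_symm hc]

theorem DFclm_det_ne (hc : SmoothCost c) (hA2 : A2 c) (x y : Fin n → ℝ) :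
    (DFclm c x y).det ≠ 0 := by
  have hmat : LinearMap.toMatrix (Pi.basisFun ℝ (Fin n)) (Pi.basisFun ℝ (Fin n))
      (DFclm c x y : (Fin n → ℝ) →ₗ[ℝ] (Fin n → ℝ)) = mixHess c x y := by
    ext i j
    rw [LinearMap.toMatrix_apply]
    simp only [Pi.basisFun_apply, Pi.basisFun_repr, ContinuousLinearMap.coe_coe]
    rw [DFclm_apply, mixHess_eq hc]
  have : (DFclm c x y).det = (mixHess c x y).det := by
    rw [ContinuousLinearMap.det, ← LinearMap.det_toMatrix (Pi.basisFun ℝ (Fin n)), hmat]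
  rw [this]
  exact hA2 x y

theorem DTclm_det_ne (hc : SmoothCost c) (hA2 : A2 c) (x y : Fin n → ℝ) :
    (DTclm c x y).det ≠ 0 := by
  have hmat : LinearMap.toMatrix (Pi.basisFun ℝ (Fin n)) (Pi.basisFun ℝ (Fin n))
      (DTclm c x y : (Fin n → ℝ) →ₗ[ℝ] (Fin n → ℝ)) = Matrix.transpose (mixHess c x y) := by
    ext i j
    rw [LinearMap.toMatrix_apply]
    simp only [Pi.basisFun_apply, Pi.basisFun_repr, ContinuousLinearMap.coe_coe]
    rw [DTclm_apply, Matrix.transpose_apply, mixHess_eq' hc]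
  have : (DTclm c x y).det = (Matrix.transpose (mixHess c x y)).det := by
    rw [ContinuousLinearMap.det, ← LinearMap.det_toMatrix (Pi.basisFun ℝ (Fin n)), hmat]
  rw [this, Matrix.det_transpose]
  exact hA2 x y

theorem contDiff_DyFull (hc : SmoothCost c) :
    ContDiff ℝ ((⊤:ℕ∞) : WithTop ℕ∞)
      (fun p : (Fin n → ℝ) × (Fin n → ℝ) => Dy c p.1 p.2) := by
  have hrw : (fun p : (Fin n → ℝ) × (Fin n → ℝ) => Dy c p.1 p.2)
      = fun p => (fun j => DcU c p ((0 : Fin n → ℝ), Pi.single j 1)) := by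
    funext p
    funext j
    exact Dy_eq hc p.1 p.2 j
  rw [hrw]
  exact contDiff_pi.mpr fun j => (smooth_DcU hc).clm_apply contDiff_const

theorem contDiff_T (hc : SmoothCost c) (y : Fin n → ℝ) :
    ContDiff ℝ ((⊤:ℕ∞) : WithTop ℕ∞) (fun x => Dy c x y) :=
  (contDiff_DyFull hc).comp (ContDiff.prodMk contDiff_id contDiff_const)

theorem T_inj (hA1 : A1 c) (y : Fin n → ℝ) :
    Function.Injective (fun x => Dy c x y) := by
  intro a b hab
  exact ((hA1.2 y (Dy c b y)).unique hab rfl)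

end S11
namespace S11

open ContinuousLinearMap

variable {n : ℕ} {c : (Fin n → ℝ) → (Fin n → ℝ) → ℝ}

/-- The openness of the image of an open set under `x ↦ Dy c x y`. -/
theorem T_isOpenMap (hc : SmoothCost c) (hA2 : A2 c) (y : Fin n → ℝ)
    {Ω : Set (Fin n → ℝ)} (hΩo : IsOpen Ω) :
    IsOpen ((fun x => Dy c x y) '' Ω) := by
  rw [isOpen_iff_mem_nhds]
  rintro z ⟨x, hxΩ, rfl⟩
  set eT := (DTclm c x y).toContinuousLinearEquivOfDetNeZero (DTclm_det_ne hc hA2 x y) with heT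
  have hstrict : HasStrictFDerivAt (fun x' => Dy c x' y) (DTclm c x y) x :=
    ((contDiff_T hc y).contDiffAt).hasStrictFDerivAt' (hasFDerivAt_T hc x y) (by simp)
  have hstrict' : HasStrictFDerivAt (fun x' => Dy c x' y)
      ((eT : (Fin n → ℝ) ≃L[ℝ] (Fin n → ℝ)) : (Fin n → ℝ) →L[ℝ] (Fin n → ℝ)) x := by
    rwa [heT, ContinuousLinearMap.coe_toContinuousLinearEquivOfDetNeZero]
  have hmap := hstrict'.map_nhds_eq_of_equiv
  rw [← hmap]
  exact Filter.mem_map.mpr (Filter.mem_of_superset (hΩo.mem_nhds hxΩ)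
    (Set.subset_preimage_image _ _))

/-- Derivative of `t ↦ c x (α t)` along a differentiable path. -/
theorem hasDerivAt_comp_path (hc : SmoothCost c) (x : Fin n → ℝ) {α : ℝ → (Fin n → ℝ)}
    {s : ℝ} {w : Fin n → ℝ} (hα : HasDerivAt α w s) :
    HasDerivAt (fun t => c x (α t)) (∑ j, w j * Dy c x (α s) j) s := by
  have hs := hasFDerivAt_sliceY hc x (α s)
  have h := hs.comp_hasDerivAt s hα
  refine h.congr_deriv ?_
  symm
  rw [clm_sum_repr ((DcU c (x, α s)).comp
    (ContinuousLinearMap.inr ℝ (Fin n → ℝ) (Fin n → ℝ))) w]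
  apply Finset.sum_congr rfl
  intro j _
  rw [Dy_eq hc]
  rfl

/-- Main path lemma: a path along which `c(x₀,·) - c(x,·)` strictly decreases for every `x ∈ Ω`
produces the strict inequality defining the excluded set. -/
theorem exclude_of_path (hc : SmoothCost c) {Ω : Set (Fin n → ℝ)} (x₀ : Fin n → ℝ)
    {α : ℝ → (Fin n → ℝ)} {W : ℝ → (Fin n → ℝ)} {σ : ℝ} (hσ : 0 < σ)
    (hd : ∀ s ∈ Set.Icc (0:ℝ) σ, HasDerivAt α (W s) s)
    (hneg : ∀ x ∈ Ω, ∀ s ∈ Set.Icc (0:ℝ) σ,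
      (∑ j, W s j * (Dy c x₀ (α s) j - Dy c x (α s) j)) < 0) :
    ∀ x ∈ Ω, c x (α 0) - c x (α σ) < c x₀ (α 0) - c x₀ (α σ) := by
  intro x hx
  have hψd : ∀ s ∈ Set.Icc (0:ℝ) σ, HasDerivAt (fun t => c x₀ (α t) - c x (α t))
      (∑ j, W s j * (Dy c x₀ (α s) j - Dy c x (α s) j)) s := by
    intro s hs
    have h1 := hasDerivAt_comp_path hc x₀ (hd s hs)
    have h2 := hasDerivAt_comp_path hc x (hd s hs)
    have h3 := h1.sub h2
    refine h3.congr_deriv ?_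
    symm
    rw [← Finset.sum_sub_distrib]
    apply Finset.sum_congr rfl
    intro j _
    ring
  have anti : StrictAntiOn (fun t => c x₀ (α t) - c x (α t)) (Set.Icc 0 σ) := by
    apply strictAntiOn_of_deriv_neg (convex_Icc 0 σ)
    · intro s hs
      exact ((hψd s hs).continuousAt).continuousWithinAt
    · intro s hs
      rw [interior_Icc] at hs
      have hs' : s ∈ Set.Icc (0:ℝ) σ := Set.Ioo_subset_Icc_self hs
      rw [(hψd s hs').deriv]
      exact hneg x hx s hs'
  have h := anti (Set.left_mem_Icc.mpr hσ.le) (Set.right_mem_Icc.mpr hσ.le) hσ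
  simp only at h
  linarith

/-- Factoring a linear functional through another one via a one-sided cone condition. -/
theorem functional_factor {L g : (Fin n → ℝ) →L[ℝ] ℝ}
    (h : ∀ v, g v < 0 → L v ≤ 0) (hg : g ≠ 0) :
    ∃ lam : ℝ, 0 ≤ lam ∧ ∀ v, L v = lam * g v := by
  obtain ⟨v₁, hv₁⟩ : ∃ v₁, g v₁ ≠ 0 := by
    by_contra hcon
    push_neg at hcon
    exact hg (ContinuousLinearMap.ext fun v => by simp [hcon v])
  set v₀ := (-(g v₁)⁻¹) • v₁ with hv₀
  have hgv₀ : g v₀ = -1 := by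
    rw [hv₀, _root_.map_smul, smul_eq_mul]
    field_simp
  have hLv₀ : L v₀ ≤ 0 := h v₀ (by rw [hgv₀]; norm_num)
  refine ⟨-(L v₀), by linarith, ?_⟩
  have key : ∀ u, g u = 0 → L u = 0 := by
    have main : ∀ u, g u = 0 → L u ≤ 0 := by
      intro u hu
      have h1 : ∀ t : ℝ, 0 < t → L u ≤ t * (-(L v₀)) := by
        intro t ht
        have hlt : g (u + t • v₀) < 0 := by
          rw [map_add, _root_.map_smul, hu, hgv₀, smul_eq_mul]
          simp only [zero_add, mul_neg_one]
          linarith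
        have h2 := h _ hlt
        rw [map_add, _root_.map_smul, smul_eq_mul] at h2
        linarith
      by_contra hcon
      push_neg at hcon
      have hforall : ∀ ε : ℝ, 0 < ε → L u ≤ ε := by
        intro ε hε
        have hpos : (0:ℝ) < -(L v₀) + 1 := by linarith
        have ht : 0 < ε / (-(L v₀) + 1) := by positivity
        have h3 := h1 _ ht
        have h4 : ε / (-(L v₀) + 1) * -(L v₀) ≤ ε := by
          rw [div_mul_eq_mul_div, div_le_iff₀ hpos]
          nlinarith
        linarith
      have := hforall (L u / 2) (by linarith)
      linarith
    intro u hu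
    have ha := main u hu
    have hb := main (-u) (by rw [map_neg, hu, neg_zero])
    rw [map_neg] at hb
    linarith
  intro v
  have hdecomp : g (v + (g v) • v₀) = 0 := by
    rw [map_add, _root_.map_smul, hgv₀, smul_eq_mul]
    ring
  have hkey := key _ hdecomp
  rw [map_add, _root_.map_smul, smul_eq_mul] at hkey
  have : L v = -(g v * L v₀) := by linarith
  rw [this]
  ring

end S11
namespace S11

variable {n : ℕ}

/-- The ray lemma: from a boundary point, directions along which `φ` strictly decreases
enter the domain. -/
theorem ray_lemma {Ω : Set (Fin n → ℝ)} (hΩo : IsOpen Ω)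
    {φ : (Fin n → ℝ) → ℝ} {V : Set (Fin n → ℝ)} (hV : IsOpen V)
    (hclV : closure Ω ⊆ V) (hφC2 : ContDiffOn ℝ 2 φ V)
    (hφneg : ∀ x ∈ Ω, φ x < 0) (hφ0 : ∀ x ∈ frontier Ω, φ x = 0)
    {x₀ : Fin n → ℝ} (hx₀ : x₀ ∈ frontier Ω) {v : Fin n → ℝ}
    (hv : fderiv ℝ φ x₀ v < 0) :
    ∃ τ > (0:ℝ), ∀ t ∈ Set.Ioc (0:ℝ) τ, x₀ + t • v ∈ Ω := by
  have hx₀cl : x₀ ∈ closure Ω := frontier_subset_closure hx₀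
  have hx₀V : x₀ ∈ V := hclV hx₀cl
  have hφdiff : ∀ z ∈ V, HasFDerivAt φ (fderiv ℝ φ z) z := by
    intro z hz
    exact ((hφC2.differentiableOn (by norm_num)).differentiableAt
      (hV.mem_nhds hz)).hasFDerivAt
  have hcfd : ContinuousOn (fun z => fderiv ℝ φ z v) V :=
    (hφC2.continuousOn_fderiv_of_isOpen hV (by norm_num)).clm_apply continuousOn_const
  obtain ⟨ρ, hρpos, hρ⟩ : ∃ ρ > (0:ℝ), ∀ z, dist z x₀ < ρ →
      (fderiv ℝ φ z v < 0 ∧ z ∈ V) := by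
    have hca : ContinuousAt (fun z => fderiv ℝ φ z v) x₀ :=
      hcfd.continuousAt (hV.mem_nhds hx₀V)
    have hev1 : ∀ᶠ z in 𝓝 x₀, fderiv ℝ φ z v < 0 := hca.eventually (gt_mem_nhds hv)
    have hev2 : ∀ᶠ z in 𝓝 x₀, z ∈ V := hV.mem_nhds hx₀V
    obtain ⟨ε, hε, hh⟩ := Metric.eventually_nhds_iff.mp (hev1.and hev2)
    exact ⟨ε, hε, fun z hz => hh hz⟩
  set τ := ρ / (2 * (‖v‖ + 1)) with hτdef
  have hnv : (0:ℝ) < ‖v‖ + 1 := by positivity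
  have hτpos : 0 < τ := by positivity
  have hτv : τ * (‖v‖ + 1) = ρ / 2 := by
    rw [hτdef]
    field_simp
  have hstep : ∀ x ∈ Metric.ball x₀ (ρ/2), ∀ t ∈ Set.Icc (0:ℝ) τ,
      dist (x + t • v) x₀ < ρ := by
    intro x hx t ht
    have h1 : dist (x + t • v) x₀ ≤ dist (x + t • v) x + dist x x₀ := dist_triangle _ _ _
    have h2 : dist (x + t • v) x = ‖t • v‖ := by
      rw [dist_eq_norm]
      congr 1
      abel
    have h3 : ‖t • v‖ = t * ‖v‖ := by
      rw [norm_smul, Real.norm_eq_abs, abs_of_nonneg ht.1]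
    have h4 : t * ‖v‖ ≤ τ * ‖v‖ := mul_le_mul_of_nonneg_right ht.2 (norm_nonneg v)
    have h5 : τ * ‖v‖ ≤ ρ / 2 := by nlinarith [norm_nonneg v, hτpos]
    have h6 : dist x x₀ < ρ / 2 := hx
    linarith
  have hline : ∀ (x : Fin n → ℝ) (t : ℝ), HasDerivAt (fun t' : ℝ => x + t' • v) v t := by
    intro x t
    have h1 : HasDerivAt (fun t' : ℝ => t' • v) ((1:ℝ) • v) t :=
      (hasDerivAt_id t).smul_const v
    simpa using h1.const_add x
  have hderφ : ∀ x ∈ Metric.ball x₀ (ρ/2), ∀ t ∈ Set.Icc (0:ℝ) τ,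
      HasDerivAt (fun t' => φ (x + t' • v)) (fderiv ℝ φ (x + t • v) v) t := by
    intro x hx t ht
    exact (hφdiff _ (hρ _ (hstep x hx t ht)).2).comp_hasDerivAt t (hline x t)
  have hanti : ∀ x ∈ Metric.ball x₀ (ρ/2),
      StrictAntiOn (fun t => φ (x + t • v)) (Set.Icc 0 τ) := by
    intro x hx
    apply strictAntiOn_of_deriv_neg (convex_Icc 0 τ)
    · intro t ht
      exact (hderφ x hx t ht).continuousAt.continuousWithinAt
    · intro t ht
      rw [interior_Icc] at ht
      have ht' : t ∈ Set.Icc (0:ℝ) τ := Set.Ioo_subset_Icc_self ht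
      rw [(hderφ x hx t ht').deriv]
      exact (hρ _ (hstep x hx t ht')).1
  have hinv : ∀ x, x ∈ Ω → x ∈ Metric.ball x₀ (ρ/2) → ∀ tb ∈ Set.Icc (0:ℝ) τ,
      x + tb • v ∈ Ω := by
    intro x hxΩ hxb tb htb
    set S := {t' : ℝ | t' ∈ Set.Icc (0:ℝ) tb ∧ x + t' • v ∈ Ω} with hSdef
    have h0S : (0:ℝ) ∈ S := ⟨⟨le_refl 0, htb.1⟩, by simpa using hxΩ⟩
    have hne : S.Nonempty := ⟨0, h0S⟩
    have hbdd : BddAbove S := ⟨tb, fun t' ht' => ht'.1.2⟩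
    set ts := sSup S with hts
    have htsIcc : ts ∈ Set.Icc (0:ℝ) tb :=
      ⟨le_csSup hbdd h0S, csSup_le hne fun t' ht' => ht'.1.2⟩
    have htsτ : ts ∈ Set.Icc (0:ℝ) τ := ⟨htsIcc.1, htsIcc.2.trans htb.2⟩
    have hmapc : Continuous (fun t' : ℝ => x + t' • v) :=
      continuous_const.add (continuous_id.smul continuous_const)
    have himg : (fun t' : ℝ => x + t' • v) '' S ⊆ Ω := by
      rintro _ ⟨t', ht', rfl⟩
      exact ht'.2
    have hclmem : x + ts • v ∈ closure Ω := by
      have h1 : x + ts • v ∈ closure ((fun t' : ℝ => x + t' • v) '' S) :=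
        (hmapc.continuousWithinAt).mem_closure_image (csSup_mem_closure hne hbdd)
      exact closure_mono himg h1
    have hφts : φ (x + ts • v) < 0 := by
      rcases eq_or_lt_of_le htsIcc.1 with heq | hlt
      · rw [← heq]
        simpa using hφneg x hxΩ
      · have h := hanti x hxb (Set.left_mem_Icc.mpr hτpos.le) htsτ hlt
        simp only [zero_smul, add_zero] at h
        have := hφneg x hxΩ
        linarith
    have hmem : x + ts • v ∈ Ω := by
      by_contra hnot
      have hfr : x + ts • v ∈ frontier Ω := by
        rw [hΩo.frontier_eq]
        exact ⟨hclmem, hnot⟩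
      exact absurd (hφ0 _ hfr) (ne_of_lt hφts)
    rcases eq_or_lt_of_le htsIcc.2 with heq | hlt
    · rwa [heq] at hmem
    · exfalso
      have hnbΩ : ∀ᶠ z in 𝓝 (x + ts • v), z ∈ Ω := hΩo.mem_nhds hmem
      have hnb : ∀ᶠ t' in 𝓝 ts, x + t' • v ∈ Ω := hmapc.continuousAt.eventually hnbΩ
      obtain ⟨ε, hε, hh⟩ := Metric.eventually_nhds_iff.mp hnb
      set t'' := min tb (ts + ε/2) with ht''
      have htlt : ts < t'' := lt_min hlt (by linarith)
      have ht''S : t'' ∈ S := by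
        refine ⟨⟨htsIcc.1.trans htlt.le, min_le_left _ _⟩, ?_⟩
        apply hh
        rw [Real.dist_eq, abs_of_nonneg (by linarith : (0:ℝ) ≤ t'' - ts)]
        have : t'' ≤ ts + ε/2 := min_le_right _ _
        linarith
      have := le_csSup hbdd ht''S
      linarith
  refine ⟨τ, hτpos, ?_⟩
  intro tb htb
  have hIcc : tb ∈ Set.Icc (0:ℝ) τ := ⟨htb.1.le, htb.2⟩
  have hclmem : x₀ + tb • v ∈ closure Ω := by
    rw [Metric.mem_closure_iff]
    intro ε hε
    obtain ⟨x, hxΩ, hdx⟩ := Metric.mem_closure_iff.mp hx₀cl (min ε (ρ/2))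
      (lt_min hε (by positivity))
    have hxb : x ∈ Metric.ball x₀ (ρ/2) := by
      rw [Metric.mem_ball, dist_comm]
      exact lt_of_lt_of_le hdx (min_le_right _ _)
    refine ⟨x + tb • v, hinv x hxΩ hxb tb hIcc, ?_⟩
    have heq2 : (x₀ + tb • v) - (x + tb • v) = x₀ - x := by abel
    rw [dist_eq_norm, heq2, ← dist_eq_norm]
    exact lt_of_lt_of_le hdx (min_le_left _ _)
  have hφ' : φ (x₀ + tb • v) < 0 := by
    have h := hanti x₀ (Metric.mem_ball_self (by positivity))
      (Set.left_mem_Icc.mpr hτpos.le) hIcc htb.1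
    simp only [zero_smul, add_zero] at h
    rw [hφ0 x₀ hx₀] at h
    exact h
  by_contra hnot
  have hfr : x₀ + tb • v ∈ frontier Ω := by
    rw [hΩo.frontier_eq]
    exact ⟨hclmem, hnot⟩
  exact absurd (hφ0 _ hfr) (ne_of_lt hφ')

end S11
namespace S11

open ContinuousLinearMap

variable {n : ℕ} {c : (Fin n → ℝ) → (Fin n → ℝ) → ℝ}

theorem contDiff_DxFull (hc : SmoothCost c) :
    ContDiff ℝ ((⊤:ℕ∞) : WithTop ℕ∞)
      (fun p : (Fin n → ℝ) × (Fin n → ℝ) => Dx c p.1 p.2) := by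
  have hrw : (fun p : (Fin n → ℝ) × (Fin n → ℝ) => Dx c p.1 p.2)
      = fun p => (fun i => DcU c p (Pi.single i 1, (0 : Fin n → ℝ))) := by
    funext p
    funext i
    exact Dx_eq hc p.1 p.2 i
  rw [hrw]
  exact contDiff_pi.mpr fun i => (smooth_DcU hc).clm_apply contDiff_const

theorem contDiff_F (hc : SmoothCost c) (x : Fin n → ℝ) :
    ContDiff ℝ ((⊤:ℕ∞) : WithTop ℕ∞) (fun y' => Dx c x y') :=
  (contDiff_DxFull hc).comp (ContDiff.prodMk contDiff_const contDiff_id)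

/-- Exclusion of exterior points. -/
theorem exclude_exterior (hc : SmoothCost c) (hA1 : A1 c)
    {Ω Ωs : Set (Fin n → ℝ)} (hΩb : Bornology.IsBounded Ω)
    (hΩso : IsOpen Ωs)
    (hconv : ∀ y ∈ Ωs, Convex ℝ ((fun x => Dy c x y) '' Ω))
    {y : Fin n → ℝ} (hy : y ∈ Ωs)
    {x₀ : Fin n → ℝ} (hx₀ : x₀ ∉ closure Ω) (hΩne : Ω.Nonempty) :
    ∃ y₀ ∈ closure Ωs, ∃ y₁ ∈ closure Ωs,
      ∀ x ∈ Ω, c x y₀ - c x y₁ < c x₀ y₀ - c x₀ y₁ := by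
  have hTc : Continuous (fun x => Dy c x y) := (contDiff_T hc y).continuous
  have hGc : Continuous (fun p : (Fin n → ℝ) × (Fin n → ℝ) => Dy c p.1 p.2) :=
    (contDiff_DyFull hc).continuous
  have hKcpt : IsCompact (closure Ω) := hΩb.isCompact_closure
  set S := (fun x => Dy c x y) '' (closure Ω) with hSdef
  have hScpt : IsCompact S := hKcpt.image hTc
  have hSconv : Convex ℝ S := by
    have h1 : S = closure ((fun x => Dy c x y) '' Ω) := by
      apply Set.Subset.antisymm
      · exact (image_closure_subset_closure_image hTc)
      · exact closure_minimal (Set.image_mono subset_closure) hScpt.isClosed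
    rw [h1]
    exact (hconv y hy).closure
  have hz₀ : Dy c x₀ y ∉ S := by
    rintro ⟨x, hx, heq⟩
    exact hx₀ ((T_inj hA1 y heq) ▸ hx)
  obtain ⟨f, u, hfu, hu⟩ := geometric_hahn_banach_closed_point hSconv hScpt.isClosed hz₀
  set w : Fin n → ℝ := fun j => f (Pi.single j 1) with hwdef
  set δ := f (Dy c x₀ y) - u with hδdef
  have hδpos : 0 < δ := by
    rw [hδdef]
    linarith
  clear_value δ
  set H : (Fin n → ℝ) × ℝ → ℝ :=
    fun q => f (Dy c x₀ (y - q.2 • w)) - f (Dy c q.1 (y - q.2 • w)) with hHdef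
  have hHcont : Continuous H := by
    have hline : Continuous (fun q : (Fin n → ℝ) × ℝ => y - q.2 • w) :=
      continuous_const.sub (continuous_snd.smul continuous_const)
    exact (f.continuous.comp (hGc.comp (continuous_const.prodMk hline))).sub
      (f.continuous.comp (hGc.comp (continuous_fst.prodMk hline)))
  have hH0 : ∀ x ∈ closure Ω, δ ≤ H (x, 0) := by
    intro x hx
    have h1 : f (Dy c x y) < u := hfu _ ⟨x, hx, rfl⟩
    have h2 : H (x, 0) = f (Dy c x₀ y) - f (Dy c x y) := by
      show f (Dy c x₀ (y - (0:ℝ) • w)) - f (Dy c x (y - (0:ℝ) • w)) = _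
      simp only [zero_smul, sub_zero]
    rw [h2, hδdef]
    linarith
  -- Find σ on which H stays positive on closure Ω.
  set B := Prod.snd '' ({q : (Fin n → ℝ) × ℝ | H q ≤ δ/2} ∩ (closure Ω ×ˢ Set.Icc (0:ℝ) 1))
    with hBdef
  have hBcpt : IsCompact B := by
    apply IsCompact.image _ continuous_snd
    exact IsCompact.inter_left (hKcpt.prod isCompact_Icc)
      (isClosed_le hHcont continuous_const)
  have h0B : (0:ℝ) ∉ B := by
    rintro ⟨⟨x, s⟩, ⟨hle, hmem⟩, hsnd⟩
    have hs0 : s = (0:ℝ) := hsnd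
    subst hs0
    have h1 : H (x, 0) ≤ δ/2 := hle
    have h2 := hH0 x hmem.1
    have h3 : δ ≤ δ/2 := h2.trans h1
    have h4 : δ/2 < δ := half_lt_self hδpos
    exact absurd h3 (not_le.mpr h4)
  obtain ⟨ε, hεpos, hεB⟩ : ∃ ε > (0:ℝ), ∀ s : ℝ, |s| < ε → s ∉ B := by
    have hopen : IsOpen Bᶜ := hBcpt.isClosed.isOpen_compl
    obtain ⟨ε, hε, hball⟩ := Metric.mem_nhds_iff.mp (hopen.mem_nhds h0B)
    refine ⟨ε, hε, fun s hs => ?_⟩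
    have : s ∈ Metric.ball (0:ℝ) ε := by
      rw [Metric.mem_ball, Real.dist_eq, sub_zero]
      exact hs
    exact hball this
  obtain ⟨ε₂, hε₂pos, hε₂⟩ : ∃ ε₂ > (0:ℝ), ∀ s : ℝ, |s| < ε₂ → y - s • w ∈ Ωs := by
    have hlc : ContinuousAt (fun s : ℝ => y - s • w) 0 :=
      (continuous_const.sub (continuous_id.smul continuous_const)).continuousAt
    have hev : ∀ᶠ s in 𝓝 (0:ℝ), y - s • w ∈ Ωs := by
      apply hlc.eventually
      have h0 : y - (0:ℝ) • w = y := by simp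
      show Ωs ∈ 𝓝 (y - (0:ℝ) • w)
      rw [h0]
      exact hΩso.mem_nhds hy
    obtain ⟨ε₂, hε₂, hh⟩ := Metric.eventually_nhds_iff.mp hev
    refine ⟨ε₂, hε₂, fun s hs => hh ?_⟩
    rw [Real.dist_eq, sub_zero]
    exact hs
  set σ := min (min (ε/2) (ε₂/2)) 1 with hσdef
  have hσpos : 0 < σ := by
    apply lt_min (lt_min (by linarith) (by linarith)) one_pos
  have hσε : σ < ε := by
    calc σ ≤ ε/2 := (min_le_left _ _).trans (min_le_left _ _)
    _ < ε := by linarith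
  have hσε₂ : σ < ε₂ := by
    calc σ ≤ ε₂/2 := (min_le_left _ _).trans (min_le_right _ _)
    _ < ε₂ := by linarith
  have hσ1 : σ ≤ 1 := min_le_right _ _
  set α : ℝ → (Fin n → ℝ) := fun s => y - s • w with hαdef
  have hd : ∀ s ∈ Set.Icc (0:ℝ) σ, HasDerivAt α (-w) s := by
    intro s _
    have h1 : HasDerivAt (fun s' : ℝ => s' • w) ((1:ℝ) • w) s := (hasDerivAt_id s).smul_const w
    simpa using h1.const_sub y
  have hHpos : ∀ x ∈ closure Ω, ∀ s ∈ Set.Icc (0:ℝ) σ, 0 < H (x, s) := by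
    intro x hx s hs
    by_contra hcon
    push_neg at hcon
    have hsB : s ∈ B := by
      refine ⟨(x, s), ⟨?_, ⟨hx, ⟨hs.1, hs.2.trans hσ1⟩⟩⟩, rfl⟩
      show H (x, s) ≤ δ / 2
      exact hcon.trans (le_of_lt (half_pos hδpos))
    have : |s| < ε := by
      rw [abs_of_nonneg hs.1]
      exact lt_of_le_of_lt hs.2 hσε
    exact hεB s this hsB
  have hneg : ∀ x ∈ Ω, ∀ s ∈ Set.Icc (0:ℝ) σ,
      (∑ j, (-w) j * (Dy c x₀ (α s) j - Dy c x (α s) j)) < 0 := by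
    intro x hx s hs
    have hpos := hHpos x (subset_closure hx) s hs
    have hsum : (∑ j, w j * (Dy c x₀ (α s) j - Dy c x (α s) j)) = H (x, s) := by
      have h1 : H (x, s) = f (Dy c x₀ (α s) - Dy c x (α s)) := by
        show f (Dy c x₀ (y - s • w)) - f (Dy c x (y - s • w)) = _
        rw [map_sub]
      rw [h1, clm_sum_repr f]
      apply Finset.sum_congr rfl
      intro j _
      rw [Pi.sub_apply, mul_comm]
    have : (∑ j, (-w) j * (Dy c x₀ (α s) j - Dy c x (α s) j))
        = -(∑ j, w j * (Dy c x₀ (α s) j - Dy c x (α s) j)) := by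
      rw [← Finset.sum_neg_distrib]
      apply Finset.sum_congr rfl
      intro j _
      simp [neg_mul]
    rw [this, hsum]
    linarith
  have hmain := exclude_of_path hc x₀ hσpos hd hneg
  refine ⟨α 0, ?_, α σ, ?_, ?_⟩
  · have : α 0 = y := by simp [hαdef]
    rw [this]
    exact subset_closure hy
  · apply subset_closure
    apply hε₂
    rw [abs_of_nonneg hσpos.le]
    exact hσε₂
  · exact hmain

end S11
namespace S11

open ContinuousLinearMap

variable {n : ℕ} {c : (Fin n → ℝ) → (Fin n → ℝ) → ℝ}

/-- Exclusion of boundary points. -/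
theorem exclude_boundary (hc : SmoothCost c) (hA1 : A1 c) (hA2 : A2 c)
    {Ω Ωs : Set (Fin n → ℝ)} (hΩo : IsOpen Ω) (hΩso : IsOpen Ωs)
    (hconv : ∀ y ∈ Ωs, Convex ℝ ((fun x => Dy c x y) '' Ω))
    {φ : (Fin n → ℝ) → ℝ} {V : Set (Fin n → ℝ)} (hV : IsOpen V)
    (hclV : closure Ω ⊆ V) (hφC2 : ContDiffOn ℝ 2 φ V)
    (hφneg : ∀ x ∈ Ω, φ x < 0) (hφ0 : ∀ x ∈ frontier Ω, φ x = 0)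
    (hφgrad : ∀ x ∈ frontier Ω, fderiv ℝ φ x ≠ 0)
    {y : Fin n → ℝ} (hy : y ∈ Ωs)
    {x₀ : Fin n → ℝ} (hx₀ : x₀ ∈ frontier Ω) (hΩne : Ω.Nonempty) :
    ∃ y₀ ∈ closure Ωs, ∃ y₁ ∈ closure Ωs,
      ∀ x ∈ Ω, c x y₀ - c x y₁ < c x₀ y₀ - c x₀ y₁ := by
  have hx₀Ω : x₀ ∉ Ω := by
    have h := hx₀
    rw [hΩo.frontier_eq] at h
    exact h.2
  have hgne : fderiv ℝ φ x₀ ≠ 0 := hφgrad x₀ hx₀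
  set γv : Fin n → ℝ := fun i => fderiv ℝ φ x₀ (Pi.single i 1) with hγdef
  have hFex : ∀ z : Fin n → ℝ, ∃! yy, Dx c x₀ yy = z := hA1.1 x₀
  set Finv : (Fin n → ℝ) → (Fin n → ℝ) := fun z => (hFex z).choose with hFinvdef
  have hFinv1 : ∀ z, Dx c x₀ (Finv z) = z := fun z => (hFex z).choose_spec.1
  have hFinv2 : ∀ z yy, Dx c x₀ yy = z → yy = Finv z :=
    fun z yy h => (hFex z).choose_spec.2 yy h
  set ζ : ℝ → (Fin n → ℝ) := fun s => Dx c x₀ y - s • γv with hζdef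
  set α : ℝ → (Fin n → ℝ) := fun s => Finv (ζ s) with hαdef
  have hζ0 : ζ 0 = Dx c x₀ y := by
    show Dx c x₀ y - (0:ℝ) • γv = Dx c x₀ y
    simp
  have hα0 : α 0 = y := by
    have h := hFinv2 (ζ 0) y (by rw [hζ0])
    exact h.symm
  have hαF : ∀ s, Dx c x₀ (α s) = ζ s := fun s => hFinv1 (ζ s)
  set eF : (Fin n → ℝ) → ((Fin n → ℝ) ≃L[ℝ] (Fin n → ℝ)) := fun yy =>
    (DFclm c x₀ yy).toContinuousLinearEquivOfDetNeZero (DFclm_det_ne hc hA2 x₀ yy)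
    with heFdef
  set Wv : ℝ → (Fin n → ℝ) := fun s => (eF (α s)).symm (-γv) with hWdef
  have hζd : ∀ s : ℝ, HasDerivAt ζ (-γv) s := by
    intro s
    have h1 : HasDerivAt (fun s' : ℝ => s' • γv) ((1:ℝ) • γv) s :=
      (hasDerivAt_id s).smul_const γv
    simpa using h1.const_sub (Dx c x₀ y)
  have hder : ∀ s : ℝ, HasDerivAt α (Wv s) s := by
    intro s
    have hcoe : ((eF (α s) : (Fin n → ℝ) ≃L[ℝ] (Fin n → ℝ)) :
        (Fin n → ℝ) →L[ℝ] (Fin n → ℝ)) = DFclm c x₀ (α s) :=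
      ContinuousLinearMap.coe_toContinuousLinearEquivOfDetNeZero _ _
    have hstrict : HasStrictFDerivAt (fun y' => Dx c x₀ y')
        ((eF (α s) : (Fin n → ℝ) ≃L[ℝ] (Fin n → ℝ)) :
          (Fin n → ℝ) →L[ℝ] (Fin n → ℝ)) (α s) := by
      rw [hcoe]
      exact ((contDiff_F hc x₀).contDiffAt).hasStrictFDerivAt'
        (hasFDerivAt_F hc x₀ (α s)) (by simp)
    have hev1 : ∀ᶠ w' in 𝓝 (Dx c x₀ (α s)),
        (fun y' => Dx c x₀ y') (hstrict.localInverse _ _ _ w') = w' :=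
      hstrict.eventually_right_inverse
    have hev2 : ∀ᶠ w' in 𝓝 (ζ s), Finv w' = hstrict.localInverse _ _ _ w' := by
      rw [← hαF s]
      exact hev1.mono fun w' hw' => (hFinv2 w' (hstrict.localInverse _ _ _ w') hw').symm
    have hev3 : ∀ᶠ t in 𝓝 s, α t = hstrict.localInverse _ _ _ (ζ t) :=
      ((hζd s).continuousAt.eventually hev2).mono fun t ht => ht
    have hlinvd : HasFDerivAt (hstrict.localInverse _ _ _)
        (((eF (α s)).symm : (Fin n → ℝ) ≃L[ℝ] (Fin n → ℝ)) :
          (Fin n → ℝ) →L[ℝ] (Fin n → ℝ)) (ζ s) := by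
      rw [← hαF s]
      exact hstrict.to_localInverse.hasFDerivAt
    have hcomp : HasDerivAt (fun t => hstrict.localInverse _ _ _ (ζ t))
        ((eF (α s)).symm (-γv)) s := by
      have h := hlinvd.comp_hasDerivAt s (hζd s)
      exact h
    exact (Filter.EventuallyEq.hasDerivAt_iff hev3).mpr hcomp
  obtain ⟨ε₃, hε₃pos, hε₃⟩ : ∃ ε₃ > (0:ℝ), ∀ s : ℝ, |s| < ε₃ → α s ∈ Ωs := by
    have hca : ContinuousAt α 0 := (hder 0).continuousAt
    have hev : ∀ᶠ s in 𝓝 (0:ℝ), α s ∈ Ωs := by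
      apply hca.eventually
      show Ωs ∈ 𝓝 (α 0)
      rw [hα0]
      exact hΩso.mem_nhds hy
    obtain ⟨ε₃, h1, h2⟩ := Metric.eventually_nhds_iff.mp hev
    refine ⟨ε₃, h1, fun s hs => h2 ?_⟩
    rw [Real.dist_eq, sub_zero]
    exact hs
  set σ := ε₃ / 2 with hσdef
  have hσpos : 0 < σ := by
    rw [hσdef]; linarith
  have hσmem : ∀ s ∈ Set.Icc (0:ℝ) σ, α s ∈ Ωs := by
    intro s hs
    apply hε₃
    rw [abs_of_nonneg hs.1]
    have := hs.2
    rw [hσdef] at this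
    linarith
  have hneg : ∀ x ∈ Ω, ∀ s ∈ Set.Icc (0:ℝ) σ,
      (∑ j, Wv s j * (Dy c x₀ (α s) j - Dy c x (α s) j)) < 0 := by
    intro x hxΩ s hs
    have hys2 : α s ∈ Ωs := hσmem s hs
    have hKopen : IsOpen ((fun x' => Dy c x' (α s)) '' Ω) := T_isOpenMap hc hA2 (α s) hΩo
    have hz₀K : Dy c x₀ (α s) ∉ (fun x' => Dy c x' (α s)) '' Ω := by
      rintro ⟨x', hx', heq⟩
      exact hx₀Ω ((T_inj hA1 (α s) heq) ▸ hx')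
    obtain ⟨f, hf⟩ := geometric_hahn_banach_open_point (hconv (α s) hys2) hKopen hz₀K
    set L := f.comp (DTclm c x₀ (α s)) with hLdef
    have hL : ∀ v, fderiv ℝ φ x₀ v < 0 → L v ≤ 0 := by
      intro v hv
      obtain ⟨τ, hτpos, hray⟩ := ray_lemma hΩo hV hclV hφC2 hφneg hφ0 hx₀ hv
      have hline : HasDerivAt (fun t : ℝ => x₀ + t • v) v 0 := by
        have h1 : HasDerivAt (fun t : ℝ => t • v) ((1:ℝ) • v) 0 :=
          (hasDerivAt_id 0).smul_const v
        simpa using h1.const_add x₀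
      have hT : HasFDerivAt (fun x' => Dy c x' (α s)) (DTclm c x₀ (α s))
          ((fun t : ℝ => x₀ + t • v) 0) := by
        have := hasFDerivAt_T hc x₀ (α s)
        simpa using this
      have h3 : HasDerivAt (fun t : ℝ => Dy c (x₀ + t • v) (α s))
          (DTclm c x₀ (α s) v) 0 := HasFDerivAt.comp_hasDerivAt (l := fun x' => Dy c x' (α s))
            (l' := DTclm c x₀ (α s)) (f := fun t : ℝ => x₀ + t • v) 0 (by simpa using hT) hline
      have h4 : HasDerivAt (fun t : ℝ => f (Dy c (x₀ + t • v) (α s))) (L v) 0 := by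
        have h := (f.hasFDerivAt).comp_hasDerivAt 0 h3
        exact h
      have hslope : Filter.Tendsto (slope (fun t : ℝ => f (Dy c (x₀ + t • v) (α s))) 0)
          (𝓝[>] (0:ℝ)) (𝓝 (L v)) :=
        (hasDerivAt_iff_tendsto_slope.mp h4).mono_left
          (nhdsWithin_mono 0 (fun t ht => ne_of_gt ht))
      apply le_of_tendsto hslope
      filter_upwards [Ioc_mem_nhdsGT hτpos] with t ht
      have hmem := hray t ht
      have hval : f (Dy c (x₀ + t • v) (α s)) < f (Dy c x₀ (α s)) := hf _ ⟨_, hmem, rfl⟩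
      rw [slope_def_field]
      simp only [zero_smul, add_zero]
      apply div_nonpos_iff.mpr
      right
      refine ⟨by linarith, by linarith [ht.1]⟩
    obtain ⟨lam, hlam0, hlamEq⟩ := functional_factor hL hgne
    set eTs := (DTclm c x₀ (α s)).toContinuousLinearEquivOfDetNeZero
      (DTclm_det_ne hc hA2 x₀ (α s)) with heTs
    have heTapp : ∀ z, eTs z = DTclm c x₀ (α s) z := fun z =>
      ContinuousLinearMap.toContinuousLinearEquivOfDetNeZero_apply _ _ z
    have hLapp : ∀ z, L z = f (DTclm c x₀ (α s) z) := fun z => rfl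
    have hlampos : 0 < lam := by
      rcases eq_or_lt_of_le hlam0 with heq | h
      · exfalso
        have hfzero : ∀ u, f u = 0 := by
          intro u
          have h1 : DTclm c x₀ (α s) (eTs.symm u) = u := by
            rw [← heTapp]
            exact eTs.apply_symm_apply u
          have h2 : L (eTs.symm u) = f u := by
            rw [hLapp, h1]
          have h3 := hlamEq (eTs.symm u)
          rw [← heq, zero_mul] at h3
          rw [← h2, h3]
        obtain ⟨xx, hxx⟩ := hΩne
        have hfx : f ((fun x' => Dy c x' (α s)) xx) < f (Dy c x₀ (α s)) :=
          hf _ ⟨xx, hxx, rfl⟩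
        rw [hfzero, hfzero] at hfx
        exact lt_irrefl 0 hfx
      · exact h
    have hpair : ∀ u : Fin n → ℝ, (∑ j, Wv s j * u j) = -(lam⁻¹ * f u) := by
      intro u
      have hDTv' : DTclm c x₀ (α s) (eTs.symm u) = u := by
        rw [← heTapp]
        exact eTs.apply_symm_apply u
      have hDFw' : DFclm c x₀ (α s) (Wv s) = -γv := by
        have h1 : eF (α s) ((eF (α s)).symm (-γv))
            = DFclm c x₀ (α s) ((eF (α s)).symm (-γv)) :=
          ContinuousLinearMap.toContinuousLinearEquivOfDetNeZero_apply _ _ _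
        have h2 : Wv s = (eF (α s)).symm (-γv) := rfl
        rw [h2, ← h1]
        exact (eF (α s)).apply_symm_apply _
      have c1 : (∑ j, (DTclm c x₀ (α s) (eTs.symm u)) j * Wv s j)
          = ∑ j, Wv s j * u j := by
        rw [hDTv']
        exact Finset.sum_congr rfl fun j _ => mul_comm _ _
      have c2 := pairing_symm hc x₀ (α s) (eTs.symm u) (Wv s)
      have c3 : (∑ i, (DFclm c x₀ (α s) (Wv s)) i * (eTs.symm u) i)
          = ∑ i, (-γv) i * (eTs.symm u) i := by rw [hDFw']
      have c4 : (∑ i, (-γv) i * (eTs.symm u) i)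
          = -(∑ i, γv i * (eTs.symm u) i) := by
        rw [← Finset.sum_neg_distrib]
        exact Finset.sum_congr rfl fun i _ => by simp [neg_mul]
      have c5 : (∑ i, γv i * (eTs.symm u) i) = fderiv ℝ φ x₀ (eTs.symm u) := by
        rw [clm_sum_repr (fderiv ℝ φ x₀) (eTs.symm u)]
        exact Finset.sum_congr rfl fun i _ => mul_comm _ _
      have c6 : lam⁻¹ * L (eTs.symm u) = fderiv ℝ φ x₀ (eTs.symm u) := by
        rw [hlamEq (eTs.symm u), ← mul_assoc, inv_mul_cancel₀ (ne_of_gt hlampos), one_mul]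
      have c7 : L (eTs.symm u) = f u := by
        rw [hLapp, hDTv']
      calc (∑ j, Wv s j * u j)
          = ∑ j, (DTclm c x₀ (α s) (eTs.symm u)) j * Wv s j := c1.symm
        _ = ∑ i, (DFclm c x₀ (α s) (Wv s)) i * (eTs.symm u) i := c2
        _ = ∑ i, (-γv) i * (eTs.symm u) i := c3
        _ = -(∑ i, γv i * (eTs.symm u) i) := c4
        _ = -(fderiv ℝ φ x₀ (eTs.symm u)) := by rw [c5]
        _ = -(lam⁻¹ * L (eTs.symm u)) := by rw [c6]
        _ = -(lam⁻¹ * f u) := by rw [c7]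
    have hfz : f (Dy c x (α s)) < f (Dy c x₀ (α s)) := hf _ ⟨x, hxΩ, rfl⟩
    have happ : (∑ j, Wv s j * (Dy c x₀ (α s) j - Dy c x (α s) j))
        = -(lam⁻¹ * f (fun j => Dy c x₀ (α s) j - Dy c x (α s) j)) :=
      hpair (fun j => Dy c x₀ (α s) j - Dy c x (α s) j)
    have hfu : f (fun j => Dy c x₀ (α s) j - Dy c x (α s) j)
        = f (Dy c x₀ (α s)) - f (Dy c x (α s)) := by
      have heq : (fun j => Dy c x₀ (α s) j - Dy c x (α s) j)
          = Dy c x₀ (α s) - Dy c x (α s) := rfl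
      rw [heq, map_sub]
    rw [happ, hfu]
    have hp : 0 < lam⁻¹ * (f (Dy c x₀ (α s)) - f (Dy c x (α s))) :=
      mul_pos (inv_pos.mpr hlampos) (by linarith)
    linarith
  have hmain := exclude_of_path hc x₀ hσpos (fun s _ => hder s) hneg
  refine ⟨α 0, ?_, α σ, ?_, hmain⟩
  · rw [hα0]
    exact subset_closure hy
  · exact subset_closure (hσmem σ ⟨hσpos.le, le_refl σ⟩)

end S11
/-- Formula (2.24): a `c`-convex domain is the intersection of all the sets
`U_{y₀,y₁,a} = {c(·,y₀) < c(·,y₁) + a}` containing it. -/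
theorem statement11
    {n : ℕ} (hn : 2 ≤ n)
    (c : (Fin n → ℝ) → (Fin n → ℝ) → ℝ)
    (hc : SmoothCost c) (hA1 : A1 c) (hA2 : A2 c)
    (c₀ : ℝ) (hc₀ : 0 < c₀)
    (hA3 : ∀ x y : Fin n → ℝ, A3at c c₀ x y)
    (Ω Ωs : Set (Fin n → ℝ))
    (hΩo : IsOpen Ω) (hΩconn : IsConnected Ω) (hΩb : Bornology.IsBounded Ω)
    (hΩso : IsOpen Ωs) (hΩsconn : IsConnected Ωs) (hΩsb : Bornology.IsBounded Ωs)
    (φ : (Fin n → ℝ) → ℝ) (V : Set (Fin n → ℝ)) (hV : IsOpen V)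
    (hclV : closure Ω ⊆ V) (hφC2 : ContDiffOn ℝ 2 φ V)
    (hφneg : ∀ x ∈ Ω, φ x < 0)
    (hφ0 : ∀ x ∈ frontier Ω, φ x = 0)
    (hφgrad : ∀ x ∈ frontier Ω, fderiv ℝ φ x ≠ 0)
    (hconv : ∀ y ∈ Ωs, Convex ℝ ((fun x => Dy c x y) '' Ω)) :
    Ω = ⋂₀ {U : Set (Fin n → ℝ) |
      ∃ y₀ ∈ closure Ωs, ∃ y₁ ∈ closure Ωs, ∃ a : ℝ,
        U = {x : Fin n → ℝ | c x y₀ < c x y₁ + a} ∧ Ω ⊆ U} := by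
  apply Set.Subset.antisymm
  · intro x hx
    rw [Set.mem_sInter]
    rintro U ⟨y₀, h0, y₁, h1, a, rfl, hsub⟩
    exact hsub hx
  · intro x₀ hx₀
    by_contra hnot
    obtain ⟨y, hy⟩ := hΩsconn.nonempty
    have hΩne : Ω.Nonempty := hΩconn.nonempty
    have hkey : ∃ y₀ ∈ closure Ωs, ∃ y₁ ∈ closure Ωs,
        ∀ x ∈ Ω, c x y₀ - c x y₁ < c x₀ y₀ - c x₀ y₁ := by
      by_cases hcl : x₀ ∈ closure Ω
      · have hfr : x₀ ∈ frontier Ω := by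
          rw [hΩo.frontier_eq]
          exact ⟨hcl, hnot⟩
        exact S11.exclude_boundary hc hA1 hA2 hΩo hΩso hconv hV hclV hφC2 hφneg
          hφ0 hφgrad hy hfr hΩne
      · exact S11.exclude_exterior hc hA1 hΩb hΩso hconv hy hcl hΩne
    obtain ⟨y₀, h0, y₁, h1, hstrict⟩ := hkey
    have hsubU : Ω ⊆ {x : Fin n → ℝ | c x y₀ < c x y₁ + (c x₀ y₀ - c x₀ y₁)} := by
      intro x hx
      have := hstrict x hx
      show c x y₀ < c x y₁ + (c x₀ y₀ - c x₀ y₁)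
      linarith
    have hmem : x₀ ∈ {x : Fin n → ℝ | c x y₀ < c x y₁ + (c x₀ y₀ - c x₀ y₁)} :=
      Set.mem_sInter.mp hx₀ _ ⟨y₀, h0, y₁, h1, c x₀ y₀ - c x₀ y₁, rfl, hsubU⟩
    have : c x₀ y₀ < c x₀ y₁ + (c x₀ y₀ - c x₀ y₁) := hmem
    linarith
end
end

section
/- Let c be a smooth cost function, let Ω ⊂ ℝⁿ be a domain, and let u be semi-concave on Ω. Suppose x_k ∈ Ω with x_k → x₀ ∈ Ω, a_k → a₀ in ℝ, and for each k the function h_k = c(·, y₀) + a_k is a local c-support of u at x_k (for a fixed y₀ ∈ ℝⁿ). Then y₀ ∈ ∂⁺_c u(x₀) and a₀ = u(x₀) − c(x₀, y₀); if in addition u is locally c-concave, then h₀ = c(·, y₀) + a₀ is a local c-support of u at x₀. -/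
open Set Filter Topology MeasureTheory
open scoped BigOperators

noncomputable section

set_option maxHeartbeats 1000000 in
/-- Limits of local `c`-supports: if `h_k = c(·,y₀) + a_k` is a local
`c`-support of `u` at `x_k`, with `x_k → x₀` and `a_k → a₀`, then
`y₀ ∈ ∂⁺_c u(x₀)`, `a₀ = u(x₀) - c(x₀,y₀)`, and if `u` is locally `c`-concave
then `c(·,y₀) + a₀` is a local `c`-support of `u` at `x₀`. -/
theorem statement14
    {n : ℕ} (hn : 2 ≤ n)
    (c : (Fin n → ℝ) → (Fin n → ℝ) → ℝ)
    (hc : SmoothCost c)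
    (Ω : Set (Fin n → ℝ)) (hΩo : IsOpen Ω) (hΩconn : IsConnected Ω)
    (u : (Fin n → ℝ) → ℝ) (husc : SemiConcaveOn Ω u)
    (x₀ : Fin n → ℝ) (hx₀ : x₀ ∈ Ω) (y₀ : Fin n → ℝ) (a₀ : ℝ)
    (xk : ℕ → Fin n → ℝ) (hxkmem : ∀ k : ℕ, xk k ∈ Ω)
    (hxk : Filter.Tendsto xk Filter.atTop (nhds x₀))
    (ak : ℕ → ℝ) (hak : Filter.Tendsto ak Filter.atTop (nhds a₀))
    (hsupp : ∀ k : ℕ, IsLocalCSupport c Ω u (xk k) y₀ (ak k)) :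
    y₀ ∈ cSuperGrad c Ω u x₀ ∧ a₀ = u x₀ - c x₀ y₀ ∧
      (LocallyCConcave c Ω u → IsLocalCSupport c Ω u x₀ y₀ a₀) := by

  classical
  obtain ⟨C, hCpos, hconc⟩ := husc
  obtain ⟨r, hr, hball⟩ := Metric.isOpen_iff.1 hΩo x₀ hx₀
  set f : (Fin n → ℝ) → ℝ := fun x => c x y₀ with hfdef
  have hfc : ContDiff ℝ (⊤ : ℕ∞) f := hc.comp (contDiff_id.prodMk contDiff_const)
  have hfd : Differentiable ℝ f := hfc.differentiable (by simp)
  -- convexity of the ball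
  have hcb : Convex ℝ (Metric.ball x₀ r) := convex_ball x₀ r
  -- Key lemma B : supergradient-type inequality at each xk inside the ball
  have keyB : ∀ x ∈ Metric.ball x₀ r, ∀ k : ℕ, xk k ∈ Metric.ball x₀ r →
      u x ≤ u (xk k) + fderiv ℝ f (xk k) (x - xk k)
        + C * ∑ i, (x i - xk k i) ^ 2 := by
    intro x hx k hk
    rcases eq_or_ne x (xk k) with heq | hne
    · rw [heq]
      have h0 : fderiv ℝ f (xk k) (xk k - xk k) = 0 := by rw [sub_self, map_zero]
      rw [h0]
      have : (0:ℝ) ≤ C * ∑ i, (xk k i - xk k i) ^ 2 := by positivity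
      linarith
    obtain ⟨hEq, δk, hδk, hloc⟩ := hsupp k
    set w : Fin n → ℝ := x - xk k with hwdef
    set W : ℝ := ∑ i, w i ^ 2 with hWdef
    have hWnn : (0:ℝ) ≤ W := Finset.sum_nonneg fun i _ => sq_nonneg _
    set T : ℝ := min 1 (δk / (‖w‖ + 1)) with hTdef
    have hwn : (0:ℝ) ≤ ‖w‖ := norm_nonneg w
    have hT : 0 < T := lt_min one_pos (div_pos hδk (by linarith))
    set φ : ℝ → ℝ := fun t => f (xk k + t • w) with hφdef
    have hline : HasDerivAt (fun t : ℝ => xk k + t • w) w 0 := by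
      simpa using ((hasDerivAt_id (0:ℝ)).smul_const w).const_add (xk k)
    have hφ : HasDerivAt φ (fderiv ℝ f (xk k) w) 0 := by
      have h1 : HasFDerivAt f (fderiv ℝ f (xk k)) ((fun t : ℝ => xk k + t • w) 0) := by
        simpa using (hfd (xk k)).hasFDerivAt
      exact h1.comp_hasDerivAt 0 hline
    have hslope : Filter.Tendsto (fun t => (φ t - φ 0) / t) (𝓝[>] (0:ℝ))
        (𝓝 (fderiv ℝ f (xk k) w)) := by
      have hs := hasDerivAt_iff_tendsto_slope.1 hφ
      have heq : slope φ 0 = fun t => (φ t - φ 0) / t := by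
        funext t; rw [slope_def_field]; rw [sub_zero]
      rw [heq] at hs
      exact hs.mono_left (nhdsWithin_mono _ fun t ht => ne_of_gt ht)
    have hev : ∀ᶠ t in 𝓝[>] (0:ℝ),
        u x - u (xk k) - C * W ≤ (φ t - φ 0) / t := by
      filter_upwards [Ioo_mem_nhdsGT_of_mem (⟨le_refl (0:ℝ), hT⟩ : (0:ℝ) ∈ Set.Ico 0 T)]
        with t ht
      have ht0 : 0 < t := ht.1
      have ht1 : t < 1 := lt_of_lt_of_le ht.2 (min_le_left _ _)
      have htδ : t < δk / (‖w‖ + 1) := lt_of_lt_of_le ht.2 (min_le_right _ _)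
      -- the point on the segment
      have hxt_eq : xk k + t • w = (1 - t) • xk k + t • x := by
        rw [hwdef]; module
      have hxtball : xk k + t • w ∈ Metric.ball x₀ r := by
        rw [hxt_eq]
        exact hcb hk hx (by linarith) ht0.le (by ring)
      have hxtΩ : xk k + t • w ∈ Ω := hball hxtball
      have hxtnear : ‖(xk k + t • w) - xk k‖ < δk := by
        have : ‖(xk k + t • w) - xk k‖ = t * ‖w‖ := by
          rw [add_sub_cancel_left, norm_smul, Real.norm_eq_abs, abs_of_pos ht0]
        rw [this]
        calc t * ‖w‖ ≤ t * (‖w‖ + 1) := by nlinarith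
          _ < (δk / (‖w‖ + 1)) * (‖w‖ + 1) := by
              apply mul_lt_mul_of_pos_right htδ; linarith
          _ = δk := by field_simp
      have h2 : u (xk k + t • w) ≤ φ t + ak k := hloc _ hxtΩ hxtnear
      have h3 : φ 0 + ak k = u (xk k) := by
        have : φ 0 = c (xk k) y₀ := by simp [hφdef, hfdef]
        rw [this, hEq]
      -- semi-concavity along the segment
      have hseg : ∀ s : ℝ, s ∈ Set.Icc (0:ℝ) 1 → (1 - s) • xk k + s • x ∈ Ω :=
        fun s hs => hball (hcb hk hx (by linarith [hs.2]) hs.1 (by ring))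
      have hcc := hconc (xk k) (hxkmem k) x (hball hx) hseg t ⟨ht0.le, ht1.le⟩
      rw [← hxt_eq] at hcc
      -- quadratic identities
      have e1 : ∑ i, ((xk k + t • w) i) ^ 2
          = (∑ i, xk k i ^ 2) + 2 * t * (∑ i, xk k i * w i) + t ^ 2 * W := by
        rw [hWdef, Finset.mul_sum, Finset.mul_sum, ← Finset.sum_add_distrib,
          ← Finset.sum_add_distrib]
        refine Finset.sum_congr rfl fun i _ => ?_
        simp only [Pi.add_apply, Pi.smul_apply, smul_eq_mul]
        ring
      have e2 : ∑ i, x i ^ 2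
          = (∑ i, xk k i ^ 2) + 2 * (∑ i, xk k i * w i) + W := by
        rw [hWdef, Finset.mul_sum, ← Finset.sum_add_distrib, ← Finset.sum_add_distrib]
        refine Finset.sum_congr rfl fun i _ => ?_
        have : w i = x i - xk k i := by simp [hwdef]
        rw [this]; ring
      rw [e1, e2] at hcc
      -- combine
      have h4 : (1 - t) * u (xk k) + t * u x ≤ u (xk k + t • w) + C * (t * (1 - t) * W) := by
        nlinarith [hcc]
      have h5 : (u x - u (xk k) - C * W) * t ≤ φ t - φ 0 := by
        nlinarith [h4, h2, h3, mul_nonneg (mul_nonneg hCpos.le (mul_nonneg ht0.le ht0.le)) hWnn]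
      rw [le_div_iff₀ ht0]
      exact h5
    have hfin := ge_of_tendsto hslope hev
    have hsum : W = ∑ i, (x i - xk k i) ^ 2 := by
      rw [hWdef]; exact Finset.sum_congr rfl fun i _ => by simp [hwdef]
    rw [hsum] at hfin
    linarith [hfin]
  -- continuity of u at x₀ via semi-concavity
  have hvconc : ConcaveOn ℝ (Metric.ball x₀ r)
      (fun z => u z - C * ∑ i, z i ^ 2) := by
    refine ⟨hcb, ?_⟩
    intro p hp q hq a b ha hb hab
    have hseg : ∀ s : ℝ, s ∈ Set.Icc (0:ℝ) 1 → (1 - s) • p + s • q ∈ Ω :=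
      fun s hs => hball (hcb hp hq (by linarith [hs.2]) hs.1 (by ring))
    have := hconc p (hball hp) q (hball hq) hseg b ⟨hb, by linarith⟩
    have hab' : a = 1 - b := by linarith
    subst hab'
    simpa [smul_eq_mul] using this
  have hucont : ContinuousAt u x₀ := by
    have h1 : ContinuousAt (fun z => u z - C * ∑ i, z i ^ 2) x₀ :=
      (hvconc.continuousOn Metric.isOpen_ball).continuousAt
        (Metric.ball_mem_nhds _ hr)
    have h2 : Continuous fun z : Fin n → ℝ => C * ∑ i, z i ^ 2 := by
      apply continuous_const.mul
      exact continuous_finset_sum _ fun i _ => (continuous_apply i).pow 2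
    have : u = fun z => (u z - C * ∑ i, z i ^ 2) + C * ∑ i, z i ^ 2 :=
      funext fun z => by ring
    rw [this]
    exact h1.add h2.continuousAt
  have hulim : Filter.Tendsto (fun k => u (xk k)) Filter.atTop (𝓝 (u x₀)) :=
    hucont.tendsto.comp hxk
  have hclim : Filter.Tendsto (fun k => c (xk k) y₀) Filter.atTop (𝓝 (c x₀ y₀)) :=
    (hfc.continuous.tendsto x₀).comp hxk
  -- part 2
  have hpart2 : a₀ = u x₀ - c x₀ y₀ := by
    have hak_eq : ∀ k, u (xk k) - c (xk k) y₀ = ak k := fun k => by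
      have := (hsupp k).1; linarith
    exact tendsto_nhds_unique hak ((hulim.sub hclim).congr hak_eq)
  -- limit lemma C
  have keyC : ∀ x ∈ Metric.ball x₀ r,
      u x ≤ u x₀ + fderiv ℝ f x₀ (x - x₀) + C * ∑ i, (x i - x₀ i) ^ 2 := by
    intro x hx
    have hev : ∀ᶠ k in Filter.atTop, xk k ∈ Metric.ball x₀ r :=
      hxk.eventually (Metric.isOpen_ball.eventually_mem (Metric.mem_ball_self hr))
    have hcf : Continuous (fderiv ℝ f) := hfc.continuous_fderiv (by simp)
    have h1 : Continuous fun z : Fin n → ℝ => (fderiv ℝ f z) (x - z) :=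
      isBoundedBilinearMap_apply.continuous.comp
        (hcf.prodMk (continuous_const.sub continuous_id))
    have h2 : Continuous fun z : Fin n → ℝ => ∑ i, (x i - z i) ^ 2 :=
      continuous_finset_sum _ fun i _ =>
        ((continuous_const.sub (continuous_apply i)).pow 2)
    have hRHS : Filter.Tendsto
        (fun k => u (xk k) + fderiv ℝ f (xk k) (x - xk k)
          + C * ∑ i, (x i - xk k i) ^ 2) Filter.atTop
        (𝓝 (u x₀ + fderiv ℝ f x₀ (x - x₀) + C * ∑ i, (x i - x₀ i) ^ 2)) := by
      exact (hulim.add ((h1.tendsto x₀).comp hxk)).add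
        (tendsto_const_nhds.mul ((h2.tendsto x₀).comp hxk))
    exact ge_of_tendsto hRHS (hev.mono fun k hk => keyB x hx k hk)
  -- part 1 : c-supergradient
  have hpart1 : y₀ ∈ cSuperGrad c Ω u x₀ := by
    intro ε hε
    have hlo := ((hfd x₀).hasFDerivAt.isLittleO).def (half_pos hε)
    rw [Metric.eventually_nhds_iff] at hlo
    obtain ⟨δ₁, hδ₁, hlo⟩ := hlo
    set M : ℝ := C * n + 1 with hMdef
    have hM : 0 < M := by positivity
    refine ⟨min r (min δ₁ (ε / (2 * M))), by positivity, ?_⟩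
    intro x hxΩ hxnear
    have hnn : (0:ℝ) ≤ ‖x - x₀‖ := norm_nonneg _
    have hx1 : ‖x - x₀‖ < r := lt_of_lt_of_le hxnear (min_le_left _ _)
    have hx2 : ‖x - x₀‖ < δ₁ :=
      lt_of_lt_of_le hxnear (le_trans (min_le_right _ _) (min_le_left _ _))
    have hx3 : ‖x - x₀‖ < ε / (2 * M) :=
      lt_of_lt_of_le hxnear (le_trans (min_le_right _ _) (min_le_right _ _))
    have hxball : x ∈ Metric.ball x₀ r := by
      rw [Metric.mem_ball, dist_eq_norm]; exact hx1
    have h1 := keyC x hxball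
    have h2 : ‖f x - f x₀ - fderiv ℝ f x₀ (x - x₀)‖ ≤ ε / 2 * ‖x - x₀‖ := by
      have := hlo (y := x) (by rw [dist_eq_norm]; exact hx2)
      simpa using this
    have h2' : fderiv ℝ f x₀ (x - x₀) ≤ f x - f x₀ + ε / 2 * ‖x - x₀‖ := by
      have := neg_abs_le (f x - f x₀ - fderiv ℝ f x₀ (x - x₀))
      rw [Real.norm_eq_abs] at h2
      linarith
    have h3 : ∑ i, (x i - x₀ i) ^ 2 ≤ (n : ℝ) * ‖x - x₀‖ ^ 2 := by
      have hbd : ∀ i : Fin n, (x i - x₀ i) ^ 2 ≤ ‖x - x₀‖ ^ 2 := by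
        intro i
        have h := norm_le_pi_norm (x - x₀) i
        rw [Real.norm_eq_abs] at h
        have habs : |x i - x₀ i| ≤ ‖x - x₀‖ := by simpa using h
        calc (x i - x₀ i) ^ 2 = |x i - x₀ i| ^ 2 := (sq_abs _).symm
          _ ≤ ‖x - x₀‖ ^ 2 := by
            apply pow_le_pow_left₀ (abs_nonneg _) habs
      calc ∑ i, (x i - x₀ i) ^ 2 ≤ ∑ _i : Fin n, ‖x - x₀‖ ^ 2 :=
            Finset.sum_le_sum fun i _ => hbd i
        _ = (n : ℝ) * ‖x - x₀‖ ^ 2 := by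
            rw [Finset.sum_const, Finset.card_univ, Fintype.card_fin, nsmul_eq_mul]
    have h4 : C * ∑ i, (x i - x₀ i) ^ 2 ≤ ε / 2 * ‖x - x₀‖ := by
      have hCn : C * ∑ i, (x i - x₀ i) ^ 2 ≤ M * ‖x - x₀‖ ^ 2 := by
        have := mul_le_mul_of_nonneg_left h3 hCpos.le
        nlinarith [sq_nonneg (‖x - x₀‖)]
      have : M * ‖x - x₀‖ ≤ ε / 2 := by
        rw [lt_div_iff₀ (by positivity : (0:ℝ) < 2 * M)] at hx3
        nlinarith
      nlinarith [hnn]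
    have hfx : f x = c x y₀ := rfl
    have hfx0 : f x₀ = c x₀ y₀ := rfl
    rw [hfx, hfx0] at h2'
    linarith
  refine ⟨hpart1, hpart2, fun hlc => ?_⟩
  have := hlc x₀ (subset_closure hx₀) y₀ hpart1
  rw [hpart2]
  exact this
end
end
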